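/- arXiv:1911.06141 — 12 statements merged into one kernel-verified Lean document; each statement's English description precedes it below -/
import Mathlib

section
/- Let (R,m) be a Noetherian local ring with residue field k and E = E(k) the injective hull of k, and M° = Hom_R(M,E) the Matlis dual. Then an R-module M is prime if and only if M° is coprime. -/
section Aux

variable {R : Type} [CommRing R] [IsLocalRing R]
  {E : Type} [AddCommGroup E] [Module R E] [Module.Injective R E]
  {M : Type} [AddCommGroup M] [Module R M]

/-- Cogenerator property: for any nonzero `x : M` there is `f : M →ₗ[R] E`
with `f x ≠ 0`. -/
lemma cogen_aux (ι : IsLocalRing.ResidueField R →ₗ[R] E) (hι : Function.Injective ι)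
    (x : M) (hx : x ≠ 0) : ∃ f : M →ₗ[R] E, f x ≠ 0 := by
  classical
  set φ : R →ₗ[R] M := LinearMap.toSpanSingleton R M x with hφ
  set ψ : R →ₗ[R] E := ι ∘ₗ Algebra.linearMap R (IsLocalRing.ResidueField R) with hψ
  have hker : LinearMap.ker φ ≤ LinearMap.ker ψ := by
    intro r hr
    have hrx : r • x = 0 := hr
    have hrm : r ∈ IsLocalRing.maximalIdeal R := by
      by_contra h
      have hu : IsUnit r := by
        simpa [IsLocalRing.mem_maximalIdeal, mem_nonunits_iff, not_not] using h
      obtain ⟨u, hu⟩ := hu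
      apply hx
      have hxeq : x = ((u⁻¹ : Rˣ) : R) • (r • x) := by
        rw [← hu, smul_smul, ← Units.val_mul]
        simp
      rw [hxeq, hrx, smul_zero]
    have : IsLocalRing.residue R r = 0 := by
      exact (IsLocalRing.residue_eq_zero_iff r).2 hrm
    simp [ψ, LinearMap.mem_ker, Algebra.linearMap_apply, this]
  -- factor ψ through the range of φ
  set χ : (R ⧸ LinearMap.ker φ) →ₗ[R] E := Submodule.liftQ _ ψ hker with hχ
  set e : (R ⧸ LinearMap.ker φ) ≃ₗ[R] LinearMap.range φ := φ.quotKerEquivRange with he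
  set g : (LinearMap.range φ : Submodule R M) →ₗ[R] E := χ ∘ₗ (e.symm : _ →ₗ[R] _) with hg
  obtain ⟨f, hf⟩ := Module.Injective.out (LinearMap.range φ).subtype
    (Submodule.injective_subtype _) g
  have hxmem : x ∈ LinearMap.range φ := ⟨1, by simp [φ]⟩
  refine ⟨f, ?_⟩
  have h1 : f x = g ⟨x, hxmem⟩ := hf ⟨x, hxmem⟩
  have hφ1 : φ 1 = x := by simp [φ]
  have h2 : e.symm ⟨x, hxmem⟩ = Submodule.Quotient.mk 1 := by
    have h4 := φ.quotKerEquivRange_symm_apply_image 1 ⟨1, rfl⟩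
    rw [show (⟨φ 1, ⟨1, rfl⟩⟩ : LinearMap.range φ) = ⟨x, hxmem⟩ from Subtype.ext hφ1] at h4
    simpa [e] using h4
  have h3 : g ⟨x, hxmem⟩ = ψ 1 := by
    rw [hg]
    simp only [LinearMap.comp_apply, LinearEquiv.coe_coe]
    rw [h2, hχ, Submodule.liftQ_apply]
  rw [h1, h3]
  simp only [ψ, LinearMap.comp_apply, Algebra.linearMap_apply, map_one]
  intro h0
  have : (1 : IsLocalRing.ResidueField R) = 0 := hι (by simpa using h0)
  exact one_ne_zero this

end Aux

/-- Let `(R, m)` be a Noetherian local ring with residue field `k`, and let `E` be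
the injective hull of `k` (an injective module containing `k = R/m` as an essential
submodule).  For an `R`-module `M`, let `M° = Hom_R(M, E)` be the Matlis dual.
Then `M` is prime iff `M°` is coprime. -/
theorem stmt3 (R : Type) [CommRing R] [IsNoetherianRing R] [IsLocalRing R]
    (E : Type) [AddCommGroup E] [Module R E] [Module.Injective R E]
    (ι : IsLocalRing.ResidueField R →ₗ[R] E) (hι : Function.Injective ι)
    (hess : ∀ U : Submodule R E, U ≠ ⊥ → U ⊓ LinearMap.range ι ≠ ⊥)
    (M : Type) [AddCommGroup M] [Module R M] :
    ((∃ x : M, x ≠ 0) ∧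
      ∀ r : R, (∀ x : M, r • x = 0) ∨ Function.Injective (fun x : M => r • x)) ↔
    ((∃ f : M →ₗ[R] E, f ≠ 0) ∧
      ∀ r : R, (∀ f : M →ₗ[R] E, r • f = 0) ∨
        Function.Surjective (fun f : M →ₗ[R] E => r • f)) := by
  constructor
  · rintro ⟨⟨x, hx⟩, hr⟩
    constructor
    · obtain ⟨f, hf⟩ := cogen_aux ι hι x hx
      exact ⟨f, fun h => hf (by simp [h])⟩
    · intro r
      rcases hr r with h | h
      · left
        intro f
        ext x
        simp [LinearMap.smul_apply, ← map_smul, h x]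
      · right
        intro g
        -- build f with f (r • x) = g x using injectivity of (r • ·)
        set μ : M →ₗ[R] M := LinearMap.lsmul R M r with hμ
        have hμinj : Function.Injective μ := h
        obtain ⟨f, hf⟩ := Module.Injective.out μ hμinj g
        refine ⟨f, ?_⟩
        ext x
        have := hf x
        simp only [μ, LinearMap.lsmul_apply] at this
        simp [LinearMap.smul_apply, ← map_smul, this]
  · rintro ⟨⟨f, hf⟩, hr⟩
    constructor
    · by_contra h
      push_neg at h
      apply hf
      ext x
      simp [h x]
    · intro r
      rcases hr r with h | h
      · left
        intro x
        by_contra hx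
        obtain ⟨g, hg⟩ := cogen_aux ι hι (r • x) hx
        apply hg
        rw [map_smul, ← LinearMap.smul_apply, h g, LinearMap.zero_apply]
      · right
        intro x y hxy
        simp only at hxy
        by_contra hne
        have hsub : x - y ≠ 0 := sub_ne_zero.2 hne
        have hrz : r • (x - y) = 0 := by rw [smul_sub, hxy, sub_self]
        obtain ⟨g, hg⟩ := cogen_aux ι hι (x - y) hsub
        obtain ⟨f', hf'⟩ := h g
        apply hg
        have := congrArg (fun φ : M →ₗ[R] E => φ (x - y)) hf'
        simp only [LinearMap.smul_apply] at this
        rw [← this, ← map_smul, hrz, map_zero]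
end

section
/- Let R be a Noetherian local ring and q a prime ideal such that R_q is a domain. Then p = Ann_R(R_q) is an associated prime of R. -/
/-- Let `R` be a Noetherian local ring and `q` a prime ideal such that `R_q` is a
domain.  Then `p = Ann_R(R_q)` is an associated prime of `R`. -/
theorem stmt6 (R : Type) [CommRing R] [IsNoetherianRing R] [IsLocalRing R]
    (q : Ideal R) [q.IsPrime] [IsDomain (Localization.AtPrime q)] :
    IsAssociatedPrime (Module.annihilator R (Localization.AtPrime q)) R := by
  set S := Localization.AtPrime q
  set p := Module.annihilator R S with hp
  have hmem : ∀ r : R, r ∈ p ↔ algebraMap R S r = 0 := by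
    intro r
    rw [hp, Module.mem_annihilator]
    constructor
    · intro h
      have := h 1
      rwa [Algebra.smul_def, mul_one] at this
    · intro h m
      rw [Algebra.smul_def, h, zero_mul]
  have hker : p = RingHom.ker (algebraMap R S) := by
    ext r; rw [hmem, RingHom.mem_ker]
  have hprime : p.IsPrime := by
    rw [hker]
    exact RingHom.ker_isPrime _
  refine ⟨hprime, ?_⟩
  -- p is finitely generated
  obtain ⟨T, hT⟩ : p.FG := IsNoetherian.noetherian p
  have hgen : ∀ t ∈ T, ∃ s : q.primeCompl, (s : R) * t = 0 := by
    intro t ht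
    have htp : t ∈ p := hT ▸ Ideal.subset_span ht
    rw [hmem] at htp
    exact (IsLocalization.map_eq_zero_iff q.primeCompl S t).mp htp
  choose f hf using hgen
  set s : q.primeCompl := ∏ t ∈ T.attach, f t.1 t.2 with hs
  have hskill : ∀ t ∈ T, (s : R) * t = 0 := by
    intro t ht
    have hdvd : (f t ht : R) ∣ (s : R) := by
      rw [hs]
      push_cast
      exact Finset.dvd_prod_of_mem _ (Finset.mem_attach T ⟨t, ht⟩)
    obtain ⟨c, hc⟩ := hdvd
    rw [hc, mul_comm (f t ht : R) c, mul_assoc, hf t ht, mul_zero]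
  refine ⟨(s : R), le_antisymm ?_ ?_⟩
  · -- p ≤ ann(R ∙ s)
    rw [← hT, Ideal.span_le]
    intro t ht
    rw [SetLike.mem_coe]
    apply Ideal.le_radical
    rw [Submodule.mem_colon_singleton, Submodule.mem_bot, smul_eq_mul, mul_comm]
    exact hskill t ht
  · -- ann(R ∙ s) ≤ p
    intro c hc
    obtain ⟨n, hc⟩ := hc
    rw [Submodule.mem_colon_singleton, Submodule.mem_bot, smul_eq_mul] at hc
    refine hprime.mem_of_pow_mem n ?_
    rw [hmem]
    exact (IsLocalization.map_eq_zero_iff q.primeCompl S (c ^ n)).mpr ⟨s, by rwa [mul_comm]⟩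
end

section
/- Let R be a Noetherian local ring. If M is a simple torsion-free R-module, then for every nonzero submodule U ⊆ M, the quotient M/U is a torsion module and U is again simple torsion-free. -/
/-- A module is torsion-free if no nonzero element is annihilated by a
non-zerodivisor of `R`. -/
def IsTorsionFreeMod (R M : Type) [CommRing R] [AddCommGroup M] [Module R M] : Prop :=
  ∀ (r : R) (x : M), r ∈ nonZeroDivisors R → r • x = 0 → x = 0

/-- A module is torsion if every element is annihilated by some non-zerodivisor. -/
def IsTorsionMod (R M : Type) [CommRing R] [AddCommGroup M] [Module R M] : Prop :=
  ∀ x : M, ∃ r ∈ nonZeroDivisors R, r • x = 0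

/-- `M` is simple torsion-free if `M ≠ 0` is torsion-free and no proper quotient
`M/U` with `U ≠ 0` is torsion-free. -/
def SimpleTorsionFree (R M : Type) [CommRing R] [AddCommGroup M] [Module R M] : Prop :=
  (∃ x : M, x ≠ 0) ∧ IsTorsionFreeMod R M ∧
    ∀ U : Submodule R M, U ≠ ⊥ → U ≠ ⊤ → ¬ IsTorsionFreeMod R (M ⧸ U)

lemma key_torsion (R M : Type) [CommRing R] [AddCommGroup M] [Module R M]
    (hM : SimpleTorsionFree R M) (U : Submodule R M) (hU : U ≠ ⊥) :
    IsTorsionMod R (M ⧸ U) := by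
  classical
  set T : Submodule R M :=
  { carrier := {x | ∃ r ∈ nonZeroDivisors R, r • x ∈ U}
    add_mem' := by
      rintro x y ⟨r, hr, hrx⟩ ⟨s, hs, hsy⟩
      refine ⟨r * s, mul_mem hr hs, ?_⟩
      have h1 : (r * s) • x = s • (r • x) := by rw [mul_comm, mul_smul]
      have h2 : (r * s) • y = r • (s • y) := by rw [mul_smul]
      rw [smul_add, h1, h2]
      exact U.add_mem (U.smul_mem s hrx) (U.smul_mem r hsy)
    zero_mem' := ⟨1, one_mem _, by simp⟩
    smul_mem' := by
      rintro c x ⟨r, hr, hrx⟩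
      exact ⟨r, hr, by rw [smul_comm]; exact U.smul_mem c hrx⟩ } with hTdef
  have hUT : U ≤ T := fun x hx => ⟨1, one_mem _, by simpa using hx⟩
  have hTbot : T ≠ ⊥ := fun h => hU (le_bot_iff.mp (h ▸ hUT))
  by_cases hTtop : T = ⊤
  · intro y
    obtain ⟨x, rfl⟩ := U.mkQ_surjective y
    have hx : x ∈ T := hTtop ▸ Submodule.mem_top
    obtain ⟨r, hr, hrx⟩ := hx
    exact ⟨r, hr, by
      rw [← map_smul, Submodule.mkQ_apply, Submodule.Quotient.mk_eq_zero]; exact hrx⟩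
  · exfalso
    apply hM.2.2 T hTbot hTtop
    intro r y hr hry
    obtain ⟨x, rfl⟩ := T.mkQ_surjective y
    rw [← map_smul, Submodule.mkQ_apply, Submodule.Quotient.mk_eq_zero] at hry
    obtain ⟨s, hs, hsx⟩ := hry
    rw [Submodule.mkQ_apply, Submodule.Quotient.mk_eq_zero]
    refine ⟨s * r, mul_mem hs hr, ?_⟩
    rwa [mul_smul]

/-- If `M` is a simple torsion-free module over a Noetherian local ring, then for
every nonzero submodule `U` the quotient `M/U` is torsion and `U` is again simple
torsion-free. -/
theorem stmt7 (R : Type) [CommRing R] [IsNoetherianRing R] [IsLocalRing R]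
    (M : Type) [AddCommGroup M] [Module R M] (hM : SimpleTorsionFree R M)
    (U : Submodule R M) (hU : U ≠ ⊥) :
    IsTorsionMod R (M ⧸ U) ∧ SimpleTorsionFree R U := by
  refine ⟨key_torsion R M hM U hU, ?_, ?_, ?_⟩
  · obtain ⟨x, hxU, hx0⟩ := (Submodule.ne_bot_iff U).mp hU
    exact ⟨⟨x, hxU⟩, by simpa [Subtype.ext_iff] using hx0⟩
  · intro r u hr hru
    have h : r • (u : M) = 0 := by simpa using congrArg Subtype.val hru
    exact Subtype.ext (hM.2.1 r u hr h)
  · intro V hVbot hVtop hTF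
    obtain ⟨v, hvV, hv0⟩ := (Submodule.ne_bot_iff V).mp hVbot
    have hW : V.map U.subtype ≠ ⊥ := by
      rw [Submodule.ne_bot_iff]
      exact ⟨(v : M), ⟨v, hvV, rfl⟩, fun h => hv0 (ZeroMemClass.coe_eq_zero.mp h)⟩
    have htor := key_torsion R M hM (V.map U.subtype) hW
    obtain ⟨u, hu⟩ : ∃ u : U, u ∉ V := by
      by_contra h
      push_neg at h
      exact hVtop (eq_top_iff.mpr fun u _ => h u)
    obtain ⟨r, hr, hrv⟩ := htor ((V.map U.subtype).mkQ (u : M))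
    rw [← map_smul, Submodule.mkQ_apply, Submodule.Quotient.mk_eq_zero] at hrv
    obtain ⟨w, hwV, hw⟩ := hrv
    have hru : r • u ∈ V := by
      have hwe : w = r • u := Subtype.ext (by rw [SetLike.val_smul]; exact hw)
      rwa [hwe] at hwV
    have h0 := hTF r (V.mkQ u) hr (by
      rw [← map_smul, Submodule.mkQ_apply, Submodule.Quotient.mk_eq_zero]; exact hru)
    rw [Submodule.mkQ_apply, Submodule.Quotient.mk_eq_zero] at h0
    exact hu h0
end

section
/- Let R be a Noetherian local ring. Every simple torsion-free R-module is uniform. -/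
/-- Over a Noetherian local ring, every simple torsion-free module is uniform:
any two nonzero submodules intersect nontrivially. -/
theorem stmt8 (R : Type) [CommRing R] [IsNoetherianRing R] [IsLocalRing R]
    (M : Type) [AddCommGroup M] [Module R M] (hM : SimpleTorsionFree R M)
    (U V : Submodule R M) (hU : U ≠ ⊥) (hV : V ≠ ⊥) :
    U ⊓ V ≠ ⊥ := by
  intro hUV
  -- Zorn: find W ⊇ U maximal with W ⊓ V = ⊥
  set s : Set (Submodule R M) := {W | W ⊓ V = ⊥} with hs
  have ih : ∀ c ⊆ s, IsChain (· ≤ ·) c → ∀ y ∈ c, ∃ ub ∈ s, ∀ z ∈ c, z ≤ ub := by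
    intro c hcs hc y hy
    refine ⟨sSup c, ?_, fun z hz => le_sSup hz⟩
    rw [Set.mem_setOf_eq, eq_bot_iff]
    rintro m ⟨hm1, hm2⟩
    obtain ⟨W, hWc, hmW⟩ := (Submodule.mem_sSup_of_directed ⟨y, hy⟩
      hc.directedOn).1 hm1
    have hW : W ⊓ V = ⊥ := hcs hWc
    rw [eq_bot_iff] at hW
    exact hW ⟨hmW, hm2⟩
  obtain ⟨W, hUW, hWmax'⟩ := zorn_le_nonempty₀ s ih U hUV
  have hWs : W ⊓ V = ⊥ := hWmax'.1
  have hWmax : ∀ z ∈ s, W ≤ z → z ≤ W := fun z hz hWz => hWmax'.2 hz hWz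
  have hWbot : W ≠ ⊥ := fun h => hU (le_bot_iff.1 (h ▸ hUW))
  have hWtop : W ≠ ⊤ := by
    intro h
    rw [h, top_inf_eq] at hWs
    exact hV hWs
  refine hM.2.2 W hWbot hWtop ?_
  intro r xb hr hrx
  obtain ⟨x, rfl⟩ := Submodule.Quotient.mk_surjective W xb
  rw [Submodule.Quotient.mk_eq_zero]
  by_contra hxW
  -- W ⊔ span {x} strictly contains W, so it meets V nontrivially
  have hne : (W ⊔ Submodule.span R {x}) ⊓ V ≠ ⊥ := by
    intro h
    have hle := hWmax _ h le_sup_left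
    exact hxW (hle (le_sup_right (α := Submodule R M)
      (Submodule.mem_span_singleton_self x)))
  obtain ⟨v, hv, hv0⟩ := Submodule.exists_mem_ne_zero_of_ne_bot hne
  obtain ⟨hvW, hvV⟩ := hv
  obtain ⟨w, hw, y, hy, rfl⟩ := Submodule.mem_sup.1 hvW
  obtain ⟨a, rfl⟩ := Submodule.mem_span_singleton.1 hy
  -- r • v ∈ W ∩ V = ⊥, so r • v = 0, so v = 0 by torsion-freeness
  have hrxW : r • x ∈ W := by
    rw [← Submodule.Quotient.mk_eq_zero, Submodule.Quotient.mk_smul]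
    exact hrx
  have hrvW : r • (w + a • x) ∈ W := by
    rw [smul_add, smul_comm r a x]
    exact W.add_mem (W.smul_mem r hw) (W.smul_mem a hrxW)
  have hrv0 : r • (w + a • x) = 0 := by
    have : r • (w + a • x) ∈ W ⊓ V := ⟨hrvW, V.smul_mem r hvV⟩
    rwa [hWs, Submodule.mem_bot] at this
  exact hv0 (hM.2.1 r _ hr hrv0)
end

section
/- Let R be a Noetherian local ring. If M is a simple torsion-free R-module, then Ann_R(M) is a maximal element of Ass(R) (with respect to inclusion). -/
section Aux

variable {R M : Type} [CommRing R] [AddCommGroup M] [Module R M]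

/-- Every quotient of a simple torsion-free module by a nonzero submodule is torsion. -/
lemma SimpleTorsionFree.quot_torsion (hM : SimpleTorsionFree R M)
    (N : Submodule R M) (hN : N ≠ ⊥) (y : M) :
    ∃ r ∈ nonZeroDivisors R, r • y ∈ N := by
  classical
  let W : Submodule R M :=
    { carrier := {m | ∃ r ∈ nonZeroDivisors R, r • m ∈ N}
      zero_mem' := ⟨1, one_mem _, by simp⟩
      add_mem' := by
        rintro a b ⟨r, hr, hra⟩ ⟨t, ht, htb⟩
        refine ⟨r * t, mul_mem hr ht, ?_⟩
        rw [smul_add]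
        refine N.add_mem ?_ ?_
        · rw [mul_comm, mul_smul]; exact N.smul_mem _ hra
        · rw [mul_smul]; exact N.smul_mem _ htb
      smul_mem' := by
        rintro c m ⟨r, hr, hrm⟩
        refine ⟨r, hr, ?_⟩
        rw [← mul_smul, mul_comm, mul_smul]
        exact N.smul_mem _ hrm }
  have hWmem : ∀ m : M, m ∈ W ↔ ∃ r ∈ nonZeroDivisors R, r • m ∈ N := fun m => Iff.rfl
  have hWtop : W = ⊤ := by
    by_contra hne
    have hWbot : W ≠ ⊥ := by
      obtain ⟨x0, hx0N, hx00⟩ := Submodule.ne_bot_iff N |>.mp hN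
      intro hb
      have hx0W : x0 ∈ W := ⟨1, one_mem _, by simpa using hx0N⟩
      rw [hb, Submodule.mem_bot] at hx0W
      exact hx00 hx0W
    refine hM.2.2 W hWbot hne ?_
    intro r xq hr hxq
    obtain ⟨m, rfl⟩ := Submodule.Quotient.mk_surjective W xq
    rw [← Submodule.Quotient.mk_smul, Submodule.Quotient.mk_eq_zero] at hxq
    rw [Submodule.Quotient.mk_eq_zero]
    obtain ⟨s, hs, hsrm⟩ := (hWmem _).mp hxq
    exact ⟨s * r, mul_mem hs hr, by rwa [mul_smul]⟩
  have : y ∈ W := by rw [hWtop]; trivial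
  exact (hWmem y).mp this

/-- In a simple torsion-free module, anything killing one nonzero element kills everything. -/
lemma SimpleTorsionFree.ann_eq (hM : SimpleTorsionFree R M)
    (x : M) (hx : x ≠ 0) (b : R) (hbx : b • x = 0) : ∀ y : M, b • y = 0 := by
  intro y
  have hN : Submodule.span R {x} ≠ ⊥ := by
    rw [Ne, Submodule.span_singleton_eq_bot]; exact hx
  obtain ⟨r, hr, hry⟩ := hM.quot_torsion _ hN y
  rw [Submodule.mem_span_singleton] at hry
  obtain ⟨a, ha⟩ := hry
  have h0 : r • (b • y) = 0 := by
    rw [← mul_smul, mul_comm, mul_smul, ← ha, ← mul_smul, mul_comm, mul_smul, hbx, smul_zero]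
  exact hM.2.1 r _ hr h0

/-- The annihilator of a simple torsion-free module is prime. -/
lemma SimpleTorsionFree.ann_prime (hM : SimpleTorsionFree R M) :
    (Module.annihilator R M).IsPrime := by
  obtain ⟨x, hx⟩ := hM.1
  constructor
  · intro h
    rw [Ideal.eq_top_iff_one] at h
    rw [Module.mem_annihilator] at h
    exact hx (by simpa using h x)
  · intro a b hab
    rw [or_iff_not_imp_right]
    intro hb
    rw [Module.mem_annihilator] at hab hb ⊢
    push_neg at hb
    obtain ⟨y, hy⟩ := hb
    have : a • (b • y) = 0 := by rw [← mul_smul]; exact hab y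
    exact hM.ann_eq _ hy a this

/-- Key: any ideal of zerodivisors containing the annihilator is contained in it. -/
lemma SimpleTorsionFree.le_ann (hM : SimpleTorsionFree R M)
    (q : Ideal R) (hq : ∀ a ∈ q, a ∉ nonZeroDivisors R)
    (hpq : Module.annihilator R M ≤ q) : q ≤ Module.annihilator R M := by
  obtain ⟨x, hx⟩ := hM.1
  intro b hb
  rw [Module.mem_annihilator]
  by_contra hbp
  push_neg at hbp
  have hbx : b • x ≠ 0 := by
    intro h
    obtain ⟨y, hy⟩ := hbp
    exact hy (hM.ann_eq x hx b h y)
  let U : Submodule R M :=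
    { carrier := {m | ∃ r ∈ nonZeroDivisors R, ∃ a ∈ q, r • m = a • x}
      zero_mem' := ⟨1, one_mem _, 0, q.zero_mem, by simp⟩
      add_mem' := by
        rintro m₁ m₂ ⟨r₁, hr₁, a₁, ha₁, h₁⟩ ⟨r₂, hr₂, a₂, ha₂, h₂⟩
        refine ⟨r₁ * r₂, mul_mem hr₁ hr₂, r₂ * a₁ + r₁ * a₂,
          q.add_mem (q.mul_mem_left _ ha₁) (q.mul_mem_left _ ha₂), ?_⟩
        rw [smul_add, add_smul]
        congr 1
        · rw [mul_comm r₁ r₂, mul_smul, mul_smul, h₁]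
        · rw [mul_smul, mul_smul, h₂]
      smul_mem' := by
        rintro c m ⟨r, hr, a, ha, h⟩
        refine ⟨r, hr, c * a, q.mul_mem_left _ ha, ?_⟩
        rw [← mul_smul, mul_comm, mul_smul, h, mul_smul] }
  have hUmem : ∀ m : M, m ∈ U ↔ ∃ r ∈ nonZeroDivisors R, ∃ a ∈ q, r • m = a • x :=
    fun m => Iff.rfl
  have hUbot : U ≠ ⊥ := by
    intro h
    have : b • x ∈ U := ⟨1, one_mem _, b, hb, by rw [one_smul]⟩
    rw [h, Submodule.mem_bot] at this
    exact hbx this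
  have hUtop : U ≠ ⊤ := by
    intro h
    have hxU : x ∈ U := by rw [h]; trivial
    obtain ⟨r, hr, a, ha, hra⟩ := (hUmem x).mp hxU
    have h0 : (r - a) • x = 0 := by rw [sub_smul, hra, sub_self]
    have hrsub : r - a ∈ Module.annihilator R M :=
      Module.mem_annihilator.mpr (hM.ann_eq x hx _ h0)
    have hrq : r ∈ q := by
      have := q.add_mem (hpq hrsub) ha
      simpa using this
    exact hq r hrq hr
  refine hM.2.2 U hUbot hUtop ?_
  intro r xq hr hxq
  obtain ⟨m, rfl⟩ := Submodule.Quotient.mk_surjective U xq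
  rw [← Submodule.Quotient.mk_smul, Submodule.Quotient.mk_eq_zero] at hxq
  rw [Submodule.Quotient.mk_eq_zero]
  obtain ⟨s, hs, a, ha, hsra⟩ := (hUmem _).mp hxq
  exact ⟨s * r, mul_mem hs hr, a, ha, by rwa [mul_smul]⟩

end Aux

/-- In a Noetherian nontrivial ring, an ideal consisting of zerodivisors has a
common nonzero annihilator.  Proved via Lasker--Noether primary decomposition. -/
lemma exists_common_ann {R : Type} [CommRing R] [IsNoetherianRing R] [Nontrivial R]
    (p : Ideal R) (hZD : ∀ z ∈ p, ∃ c : R, c ≠ 0 ∧ z * c = 0) :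
    ∃ c : R, c ≠ 0 ∧ ∀ z ∈ p, z * c = 0 := by
  classical
  suffices h : ∀ s : Finset (Ideal R), s.inf id = ⊥ → (∀ J ∈ s, J.IsPrimary) →
      ∃ c : R, c ≠ 0 ∧ ∀ z ∈ p, z * c = 0 by
    obtain ⟨s, hinf, hprim⟩ := Submodule.isLasker R R ⊥
    exact h s hinf fun J hJ => hprim hJ
  intro s
  induction s using Finset.strongInductionOn with
  | _ s IH =>
    intro hinf hprim
    rcases Finset.eq_empty_or_nonempty s with rfl | hsne
    · rw [Finset.inf_empty] at hinf
      have h1 : (1 : R) ∈ (⊥ : Ideal R) := hinf ▸ Submodule.mem_top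
      simp at h1
    have hcov : (p : Set R) ⊆ ⋃ J ∈ (↑s : Set (Ideal R)), ((Ideal.radical J : Ideal R) : Set R) := by
      intro z hz
      obtain ⟨c, hc0, hzc⟩ := hZD z hz
      have hex : ∃ J ∈ s, c ∉ J := by
        by_contra hcon
        push_neg at hcon
        have hcmem : c ∈ s.inf id := Submodule.mem_finsetInf.mpr hcon
        rw [hinf, Submodule.mem_bot] at hcmem
        exact hc0 hcmem
      obtain ⟨J, hJs, hcJ⟩ := hex
      have h0 : c * z ∈ J := by rw [mul_comm, hzc]; exact J.zero_mem
      rcases (Ideal.isPrimary_iff.mp (hprim J hJs)).2 h0 with h | h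
      · exact absurd h hcJ
      · exact Set.mem_biUnion hJs h
    have havoid : ∃ J ∈ s, p ≤ J.radical :=
      (Ideal.subset_union_prime (f := fun J : Ideal R => J.radical) ⊥ ⊥
        (fun J hJ _ _ => Ideal.isPrime_radical (hprim J hJ))).mp hcov
    obtain ⟨Q₀, hQ₀s, hpQ₀⟩ := havoid
    by_cases hbot : (s.erase Q₀).inf id = ⊥
    · exact IH _ (Finset.erase_ssubset hQ₀s) hbot fun J hJ => hprim J (Finset.mem_of_mem_erase hJ)
    · obtain ⟨c₀, hc₀mem, hc₀⟩ := Submodule.ne_bot_iff _ |>.mp hbot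
      obtain ⟨n, hn⟩ := Ideal.exists_radical_pow_le_of_fg Q₀ (IsNoetherian.noetherian _)
      have hpn : p ^ n ≤ Q₀ := le_trans (Ideal.pow_right_mono hpQ₀ n) hn
      have hkey : p ^ n * Ideal.span {c₀} = ⊥ := by
        have hle : p ^ n * Ideal.span {c₀} ≤ s.inf id := by
          refine Finset.le_inf fun J hJ => ?_
          by_cases hJQ : J = Q₀
          · subst hJQ
            exact le_trans Ideal.mul_le_left hpn
          · have hJ' : J ∈ s.erase Q₀ := Finset.mem_erase.mpr ⟨hJQ, hJ⟩
            have hcJ : c₀ ∈ J := Submodule.mem_finsetInf.mp hc₀mem J hJ'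
            refine le_trans Ideal.mul_le_right ?_
            rwa [Ideal.span_singleton_le_iff_mem]
        rw [hinf] at hle
        exact le_bot_iff.mp hle
      have hEx : ∃ m, p ^ m * Ideal.span {c₀} = ⊥ := ⟨n, hkey⟩
      have hk : p ^ Nat.find hEx * Ideal.span {c₀} = ⊥ := Nat.find_spec hEx
      have hk0 : Nat.find hEx ≠ 0 := by
        intro h
        rw [h, pow_zero, one_mul, Ideal.span_singleton_eq_bot] at hk
        exact hc₀ hk
      obtain ⟨m, hm⟩ := Nat.exists_eq_succ_of_ne_zero hk0
      have hmlt : p ^ m * Ideal.span {c₀} ≠ ⊥ := Nat.find_min hEx (by omega)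
      obtain ⟨c, hcmem, hcne⟩ := Submodule.ne_bot_iff _ |>.mp hmlt
      refine ⟨c, hcne, fun z hz => ?_⟩
      have hzc : z * c ∈ p * (p ^ m * Ideal.span {c₀}) := Ideal.mul_mem_mul hz hcmem
      have heq : p * (p ^ m * Ideal.span {c₀}) = p ^ (m + 1) * Ideal.span {c₀} := by
        rw [← mul_assoc, ← pow_succ']
      rw [heq, show m + 1 = Nat.find hEx from by omega, hk, Submodule.mem_bot] at hzc
      exact hzc

/-- If `M` is a simple torsion-free module over a Noetherian local ring `R`, then
`Ann_R(M)` is a maximal element of `Ass(R)` with respect to inclusion. -/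
theorem stmt9 (R : Type) [CommRing R] [IsNoetherianRing R] [IsLocalRing R]
    (M : Type) [AddCommGroup M] [Module R M] (hM : SimpleTorsionFree R M) :
    IsAssociatedPrime (Module.annihilator R M) R ∧
      ∀ q : Ideal R, IsAssociatedPrime q R → Module.annihilator R M ≤ q →
        q = Module.annihilator R M := by
  classical
  obtain ⟨x, hx⟩ := hM.1
  have hZD : ∀ z ∈ Module.annihilator R M, ∃ c : R, c ≠ 0 ∧ z * c = 0 := by
    intro z hz
    have hz' : z ∉ nonZeroDivisors R := by
      intro hnz
      exact hx (hM.2.1 z x hnz (Module.mem_annihilator.mp hz x))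
    rw [mem_nonZeroDivisors_iff_right] at hz'
    push_neg at hz'
    obtain ⟨c, hc1, hc2⟩ := hz'
    exact ⟨c, hc2, by rwa [mul_comm]⟩
  have hmaxq : ∀ q : Ideal R, IsAssociatedPrime q R → Module.annihilator R M ≤ q →
      q = Module.annihilator R M := by
    intro q hq hpq
    obtain ⟨hqprime, y, hy⟩ := isAssociatedPrime_iff.mp hq
    have hy0 : y ≠ 0 := by
      rintro rfl
      apply hqprime.ne_top
      rw [hy, eq_top_iff]; intro r _; rw [Submodule.mem_colon_singleton]; simp
    have hqzd : ∀ a ∈ q, a ∉ nonZeroDivisors R := by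
      intro a ha hnz
      rw [hy, Submodule.mem_colon_singleton, Submodule.mem_bot] at ha
      exact hy0 (hnz.2 y (by rwa [smul_eq_mul, mul_comm] at ha))
    exact le_antisymm (hM.le_ann q hqzd hpq) hpq
  refine ⟨?_, hmaxq⟩
  obtain ⟨c, hc0, hc⟩ := exists_common_ann (Module.annihilator R M) hZD
  obtain ⟨P, hP, hlP⟩ := exists_le_isAssociatedPrime_of_isNoetherianRing R c hc0
  have hpP : Module.annihilator R M ≤ P := by
    refine le_trans ?_ hlP
    intro z hz
    rw [Submodule.mem_colon_singleton, Submodule.mem_bot, smul_eq_mul]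
    exact hc z hz
  have := hmaxq P hP hpP
  rwa [← this]
end

section
/- Let R be a Noetherian local integral domain. An R-module M is simple torsion-free if and only if M is nonzero, torsion-free, and uniform. -/
/-- Over a Noetherian local integral domain, a module `M` is simple torsion-free
iff `M` is nonzero, torsion-free and uniform. -/
theorem stmt10 (R : Type) [CommRing R] [IsNoetherianRing R] [IsLocalRing R] [IsDomain R]
    (M : Type) [AddCommGroup M] [Module R M] :
    SimpleTorsionFree R M ↔
      ((∃ x : M, x ≠ 0) ∧ IsTorsionFreeMod R M ∧
        ∀ U V : Submodule R M, U ≠ ⊥ → V ≠ ⊥ → U ⊓ V ≠ ⊥) := by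
  constructor
  · rintro ⟨hne, htf, hq⟩
    refine ⟨hne, htf, ?_⟩
    intro U V hU hV hUV
    -- torsion closure of U
    set W : Submodule R M :=
      { carrier := {m | ∃ r ∈ nonZeroDivisors R, r • m ∈ U}
        add_mem' := by
          rintro a b ⟨r, hr, hra⟩ ⟨s, hs, hsb⟩
          refine ⟨r * s, mul_mem hr hs, ?_⟩
          rw [smul_add]
          have h1 : (r * s) • a = s • (r • a) := by rw [mul_comm, mul_smul]
          have h2 : (r * s) • b = r • (s • b) := by rw [mul_smul]
          rw [h1, h2]
          exact U.add_mem (U.smul_mem s hra) (U.smul_mem r hsb)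
        zero_mem' := ⟨1, one_mem _, by simp⟩
        smul_mem' := by
          rintro c a ⟨r, hr, hra⟩
          exact ⟨r, hr, by rw [smul_comm]; exact U.smul_mem c hra⟩ } with hWdef
    have hUW : U ≤ W := fun m hm => ⟨1, one_mem _, by simpa using hm⟩
    have hWbot : W ≠ ⊥ := by
      intro h
      exact hU (le_bot_iff.mp (h ▸ hUW))
    have hWtop : W ≠ ⊤ := by
      intro h
      obtain ⟨v, hvV, hv0⟩ := Submodule.exists_mem_ne_zero_of_ne_bot hV
      have hvW : v ∈ W := h ▸ Submodule.mem_top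
      obtain ⟨r, hr, hrv⟩ := hvW
      have : r • v ∈ U ⊓ V := ⟨hrv, V.smul_mem r hvV⟩
      rw [hUV] at this
      exact hv0 (htf r v hr (by simpa using this))
    refine hq W hWbot hWtop ?_
    intro r x hr hx
    obtain ⟨m, rfl⟩ := Submodule.Quotient.mk_surjective W x
    have hrm : r • m ∈ W := by
      rwa [← Submodule.Quotient.mk_smul, Submodule.Quotient.mk_eq_zero] at hx
    obtain ⟨s, hs, hsrm⟩ := hrm
    have : m ∈ W := ⟨s * r, mul_mem hs hr, by rwa [mul_smul]⟩
    exact (Submodule.Quotient.mk_eq_zero W).mpr this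
  · rintro ⟨hne, htf, huni⟩
    refine ⟨hne, htf, ?_⟩
    intro U hUbot hUtop htfq
    obtain ⟨x, hxU⟩ : ∃ x : M, x ∉ U := by
      by_contra h
      push_neg at h
      exact hUtop (Submodule.eq_top_iff'.mpr h)
    have hx0 : x ≠ 0 := fun h => hxU (h ▸ U.zero_mem)
    have hspan : Submodule.span R {x} ≠ ⊥ := by
      simpa [Submodule.span_singleton_eq_bot] using hx0
    obtain ⟨y, hy, hy0⟩ :=
      Submodule.exists_mem_ne_zero_of_ne_bot (huni U (Submodule.span R {x}) hUbot hspan)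
    obtain ⟨r, rfl⟩ := Submodule.mem_span_singleton.mp hy.2
    have hr0 : r ≠ 0 := fun h => hy0 (by simp [h])
    have : (Submodule.Quotient.mk x : M ⧸ U) = 0 := by
      refine htfq r _ (mem_nonZeroDivisors_of_ne_zero hr0) ?_
      rw [← Submodule.Quotient.mk_smul, Submodule.Quotient.mk_eq_zero]
      exact hy.1
    exact hxU ((Submodule.Quotient.mk_eq_zero U).mp this)
end

section
/- Let R be a Noetherian local ring and p ∈ Spec(R). The R-module R/p is simple torsion-free if and only if p is a maximal element of Ass(R). -/
section Aux

variable {R : Type} [CommRing R]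

lemma tf_of_linearEquiv {M N : Type} [AddCommGroup M] [Module R M] [AddCommGroup N] [Module R N]
    (e : M ≃ₗ[R] N) (h : IsTorsionFreeMod R M) : IsTorsionFreeMod R N := by
  intro r x hr hx
  have h1 : r • e.symm x = 0 := by
    have := congrArg e.symm hx
    simpa using this
  have h2 := h r (e.symm x) hr h1
  have := congrArg e h2
  simpa using this

lemma tf_quot_iff (I : Ideal R) :
    IsTorsionFreeMod R (R ⧸ I) ↔ ∀ r ∈ nonZeroDivisors R, ∀ x : R, r * x ∈ I → x ∈ I := by
  constructor
  · intro h r hr x hx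
    have h0 : r • (Submodule.Quotient.mk x : R ⧸ I) = 0 := by
      rw [← Submodule.Quotient.mk_smul, Submodule.Quotient.mk_eq_zero]
      simpa [smul_eq_mul] using hx
    have := h r _ hr h0
    rwa [Submodule.Quotient.mk_eq_zero] at this
  · intro h r x hr hx
    obtain ⟨y, rfl⟩ := Submodule.Quotient.mk_surjective I x
    rw [← Submodule.Quotient.mk_smul, Submodule.Quotient.mk_eq_zero] at hx
    rw [Submodule.Quotient.mk_eq_zero]
    exact h r hr y (by simpa [smul_eq_mul] using hx)

/-- In a Noetherian ring, a prime consisting of zerodivisors is contained in an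
associated prime. -/
lemma prime_le_assPrime [IsNoetherianRing R] [Nontrivial R] (q : Ideal R) (hq : q.IsPrime)
    (hZD : ∀ a ∈ q, ∃ x : R, x ≠ 0 ∧ a * x = 0) :
    ∃ P : Ideal R, IsAssociatedPrime P R ∧ q ≤ P := by
  classical
  obtain ⟨s, hs, hsp⟩ : ∃ s : Finset (Ideal R), s.inf id = ⊥ ∧ ∀ ⦃J⦄, J ∈ s → J.IsPrimary :=
    Ideal.isLasker R R ⊥
  obtain ⟨t, hts, ht, htm⟩ : ∃ t : Finset (Ideal R), t ⊆ s ∧ t.inf id = ⊥ ∧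
      ∀ ⦃J⦄, J ∈ t → ¬ (t.erase J).inf id ≤ J := Ideal.decomposition_erase_inf hs
  have htp : ∀ J ∈ t, J.IsPrimary := fun J hJ => hsp (hts hJ)
  -- `q` is contained in the union of the radicals of the `J ∈ t`
  have hsub : (q : Set R) ⊆ ⋃ J ∈ (t : Set (Ideal R)), ((Ideal.radical J : Ideal R) : Set R) := by
    intro a ha
    obtain ⟨x, hx0, hax⟩ := hZD a ha
    have hex : ∃ J ∈ t, x ∉ J := by
      by_contra hc
      push_neg at hc
      apply hx0
      have hxm : x ∈ t.inf id := Submodule.mem_finsetInf.mpr hc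
      rw [ht] at hxm
      simpa using hxm
    obtain ⟨J, hJt, hxJ⟩ := hex
    have hax' : x * a ∈ J := by rw [mul_comm, hax]; exact J.zero_mem
    have : a ∈ J.radical :=
      ((Ideal.isPrimary_iff.mp (htp J hJt)).2 hax').resolve_left hxJ
    exact Set.mem_biUnion hJt this
  -- prime avoidance
  have h2 : ∃ J ∈ t, q ≤ J.radical := by
    have := (Ideal.subset_union_prime (⊤ : Ideal R) (⊤ : Ideal R)
      (f := fun J : Ideal R => J.radical) (s := t)
      (fun J hJ _ _ => Ideal.isPrime_radical (htp J hJ))).mp hsub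
    exact this
  obtain ⟨J, hJt, hqJ⟩ := h2
  -- an element annihilated by `J`
  obtain ⟨x, hxinf, hxJ⟩ := SetLike.not_le_iff_exists.mp (htm hJt)
  have hx0 : x ≠ 0 := by
    rintro rfl; exact hxJ J.zero_mem
  have hJann : J ≤ (Submodule.span R {x} : Submodule R R).annihilator := by
    intro r hr
    rw [Submodule.mem_annihilator_span_singleton]
    have h1 : r • x ∈ t.inf id := by
      have h2 : t.inf id = J ⊓ (t.erase J).inf id := by
        conv_lhs => rw [← Finset.insert_erase hJt]
        rw [Finset.inf_insert]; rfl
      rw [h2]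
      refine ⟨J.mul_mem_right x hr, ?_⟩
      refine Submodule.mem_finsetInf.mpr fun K hK => ?_
      have hxK : x ∈ (id K : Ideal R) := Submodule.mem_finsetInf.mp hxinf K hK
      exact Ideal.mul_mem_left _ r hxK
    rw [ht] at h1
    simpa using h1
  obtain ⟨P, hP, hannP⟩ := exists_le_isAssociatedPrime_of_isNoetherianRing R x hx0
  refine ⟨P, hP, le_trans hqJ ?_⟩
  calc J.radical ≤ ((Submodule.span R {x} : Submodule R R).annihilator).radical :=
        Ideal.radical_mono hJann
    _ ≤ P.radical := Ideal.radical_mono (by rwa [Submodule.bot_colon'] at hannP)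
    _ = P := hP.isPrime.radical

/-- Modules over `R` annihilated by an associated prime are torsion-free quotients. -/
lemma tf_quot_of_assPrime [IsNoetherianRing R] {q : Ideal R} (hq : IsAssociatedPrime q R) :
    IsTorsionFreeMod R (R ⧸ q) := by
  obtain ⟨hqp, y, hy⟩ := isAssociatedPrime_iff.mp hq
  rw [Submodule.bot_colon'] at hy
  have hy0 : y ≠ 0 := by
    rintro rfl
    apply hqp.ne_top
    rw [hy]
    rw [Submodule.span_singleton_eq_bot.mpr rfl, Submodule.annihilator_bot]
  rw [tf_quot_iff]
  intro r hr x hx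
  have hrq : r ∉ q := by
    intro hrq
    rw [hy, Submodule.mem_annihilator_span_singleton, smul_eq_mul] at hrq
    exact hy0 (hr.2 y (by rwa [mul_comm] at hrq))
  exact (hqp.mem_or_mem hx).resolve_left hrq

end Aux

/-- Over a Noetherian local ring `R`, the module `R/p` is simple torsion-free iff
`p` is a maximal element of `Ass(R)`. -/
theorem stmt11 (R : Type) [CommRing R] [IsNoetherianRing R] [IsLocalRing R]
    (p : Ideal R) [p.IsPrime] :
    SimpleTorsionFree R (R ⧸ p) ↔
      (IsAssociatedPrime p R ∧
        ∀ q : Ideal R, IsAssociatedPrime q R → p ≤ q → q = p) := by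
  have hp : p.IsPrime := inferInstance
  have : Nontrivial R := by
    refine nontrivial_of_ne 0 1 fun h01 => hp.ne_top ?_
    rw [Ideal.eq_top_iff_one, ← h01]; exact p.zero_mem
  have hmk1 : (Submodule.Quotient.mk 1 : R ⧸ p) ≠ 0 := by
    rw [Ne, Submodule.Quotient.mk_eq_zero]
    exact fun h => hp.ne_top (Ideal.eq_top_iff_one p |>.mpr h)
  constructor
  · rintro ⟨-, htf, hquot⟩
    -- any associated prime above p must equal p
    have key : ∀ q : Ideal R, IsAssociatedPrime q R → p ≤ q → q = p := by
      intro q hqass hpq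
      by_contra hne
      have hlt : p < q := lt_of_le_of_ne hpq (Ne.symm hne)
      set U : Submodule R (R ⧸ p) := Submodule.map p.mkQ q with hU
      have hUb : U ≠ ⊥ := by
        obtain ⟨a, haq, hap⟩ := SetLike.exists_of_lt hlt
        intro hbot
        have : p.mkQ a ∈ U := Submodule.mem_map_of_mem haq
        rw [hbot, Submodule.mem_bot, Submodule.mkQ_apply,
          Submodule.Quotient.mk_eq_zero] at this
        exact hap this
      have hUt : U ≠ ⊤ := by
        intro htop
        apply hqass.isPrime.ne_top
        have := congrArg (Submodule.comap p.mkQ) htop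
        rw [hU] at this
        rw [Submodule.comap_map_eq, Submodule.ker_mkQ, sup_eq_left.mpr hpq,
          Submodule.comap_top] at this
        exact this
      refine hquot U hUb hUt ?_
      have e := (Submodule.quotientQuotientEquivQuotient p q hpq).symm
      exact tf_of_linearEquiv e (tf_quot_of_assPrime hqass)
    -- p is contained in some associated prime
    have hZD : ∀ a ∈ p, ∃ x : R, x ≠ 0 ∧ a * x = 0 := by
      intro a ha
      by_contra hc
      push_neg at hc
      have hanz : a ∈ nonZeroDivisors R := by
        rw [mem_nonZeroDivisors_iff_right]
        intro z hz
        by_contra hz0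
        exact (hc z hz0) (by rwa [mul_comm] at hz)
      have := htf a (Submodule.Quotient.mk 1) hanz ?_
      · exact hmk1 this
      · rw [← Submodule.Quotient.mk_smul, Submodule.Quotient.mk_eq_zero]
        simpa [smul_eq_mul] using ha
    obtain ⟨P, hP, hpP⟩ := prime_le_assPrime p hp hZD
    have hPp : P = p := key P hP hpP
    exact ⟨hPp ▸ hP, key⟩
  · rintro ⟨hass, hmax⟩
    refine ⟨⟨Submodule.Quotient.mk 1, hmk1⟩, tf_quot_of_assPrime hass, ?_⟩
    intro U hUb hUt hTF
    set I : Ideal R := U.comap p.mkQ with hI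
    have hpI : p ≤ I := by
      intro x hx
      rw [hI, Submodule.mem_comap, Submodule.mkQ_apply,
        Submodule.Quotient.mk_eq_zero p |>.mpr hx]
      exact U.zero_mem
    have hmap : Submodule.map p.mkQ I = U :=
      Submodule.map_comap_eq_self (by rw [Submodule.range_mkQ]; exact le_top)
    have hItop : I ≠ ⊤ := by
      intro h
      apply hUt
      rw [← hmap, h, Submodule.map_top, Submodule.range_mkQ]
    have hpneI : p ≠ I := by
      intro h
      apply hUb
      rw [← hmap, ← h, eq_bot_iff]
      rintro _ ⟨x, hx, rfl⟩
      rw [Submodule.mem_bot, Submodule.mkQ_apply, Submodule.Quotient.mk_eq_zero]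
      exact hx
    have hTF' : IsTorsionFreeMod R (R ⧸ I) := by
      refine tf_of_linearEquiv (Submodule.quotientQuotientEquivQuotient p I hpI) ?_
      rw [hmap]
      exact hTF
    have : Nontrivial (R ⧸ I) :=
      Submodule.Quotient.nontrivial_iff.mpr hItop
    obtain ⟨q0, hq0⟩ := associatedPrimes.nonempty R (R ⧸ I)
    obtain ⟨hq0p, x, hx⟩ := isAssociatedPrime_iff.mp hq0
    rw [Submodule.bot_colon'] at hx
    have hx0 : x ≠ 0 := by
      rintro rfl
      apply hq0p.ne_top
      rw [hx, Submodule.span_singleton_eq_bot.mpr rfl, Submodule.annihilator_bot]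
    have hIq0 : I ≤ q0 := by
      intro a ha
      rw [hx, Submodule.mem_annihilator_span_singleton]
      obtain ⟨y, rfl⟩ := Submodule.Quotient.mk_surjective I x
      rw [← Submodule.Quotient.mk_smul, Submodule.Quotient.mk_eq_zero]
      exact I.mul_mem_right y ha
    have hZD0 : ∀ a ∈ q0, ∃ z : R, z ≠ 0 ∧ a * z = 0 := by
      intro a ha
      by_contra hc
      push_neg at hc
      have hanz : a ∈ nonZeroDivisors R := by
        rw [mem_nonZeroDivisors_iff_right]
        intro z hz
        by_contra hz0
        exact (hc z hz0) (by rwa [mul_comm] at hz)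
      apply hx0
      refine hTF' a x hanz ?_
      rw [hx, Submodule.mem_annihilator_span_singleton] at ha
      exact ha
    obtain ⟨P, hP, hq0P⟩ := prime_le_assPrime q0 hq0p hZD0
    have hPp : P = p := hmax P hP (le_trans hpI (le_trans hIq0 hq0P))
    apply hpneI
    exact le_antisymm hpI (le_trans hIq0 (hq0P.trans hPp.le))
end

section
/- Let R be a Noetherian local ring. An R-module M ≠ 0 is simple torsion-free if and only if M embeds into κ(p) = R_p/(p R_p) for some maximal element p of Ass(R). -/
section AssAux
variable {R : Type*} [CommRing R] {M : Type*} [AddCommGroup M] [Module R M]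

lemma aux_mem_ann {z : M} {a : R} : a ∈ (Submodule.span R {z}).annihilator ↔ a • z = 0 :=
  Submodule.mem_annihilator_span_singleton z a

lemma aux_iff [IsNoetherianRing R] {q : Ideal R} :
    IsAssociatedPrime q M ↔ q.IsPrime ∧ ∃ y : M, q = (Submodule.span R {y}).annihilator := by
  rw [isAssociatedPrime_iff]
  have e : ∀ y : M, Submodule.colon (⊥ : Submodule R M) {y} = (Submodule.span R {y}).annihilator := by
    intro y; ext a; rw [Submodule.mem_colon_singleton, Submodule.mem_bot, aux_mem_ann]
  simp only [e]

/-- Ass(M) ⊆ {p} ∪ Ass(M/Rx) when p = ann(x) is prime. -/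
lemma aux_ass_subset [IsNoetherianRing R] (x : M) {p : Ideal R} (hp : p.IsPrime)
    (hx : p = (Submodule.span R {x}).annihilator) :
    associatedPrimes R M ⊆
      insert p (associatedPrimes R (M ⧸ (Submodule.span R {x}))) := by
  rintro q hq'
  obtain ⟨hq, y, hy⟩ := aux_iff.mp hq'
  by_cases hcase : ∀ d : R, d • y ∈ Submodule.span R {x} → d • y = 0
  · right
    refine aux_iff.mpr ⟨hq, Submodule.Quotient.mk y, ?_⟩
    ext a
    rw [aux_mem_ann, ← Submodule.Quotient.mk_smul, Submodule.Quotient.mk_eq_zero]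
    constructor
    · intro ha
      have h0 : a • y = 0 := aux_mem_ann.mp (hy ▸ ha)
      rw [h0]; exact Submodule.zero_mem _
    · intro ha
      rw [hy, aux_mem_ann]
      exact hcase a ha
  · left
    push_neg at hcase
    obtain ⟨d, hdmem, hdne⟩ := hcase
    obtain ⟨c, hc⟩ := Submodule.mem_span_singleton.mp hdmem
    have hdq : d ∉ q := fun h => hdne (aux_mem_ann.mp (hy ▸ h))
    have hcp : c ∉ p := fun h => hdne (hc ▸ aux_mem_ann.mp (hx ▸ h))
    apply le_antisymm
    · intro a ha
      have hay : a • y = 0 := aux_mem_ann.mp (hy ▸ ha)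
      have h1 : (a * c) • x = 0 := by
        rw [mul_smul, hc, smul_comm, hay, smul_zero]
      have h2 : a * c ∈ p := hx ▸ aux_mem_ann.mpr h1
      exact (hp.mem_or_mem h2).resolve_right hcp
    · intro a ha
      have hax : a • x = 0 := aux_mem_ann.mp (hx ▸ ha)
      have h1 : (a * d) • y = 0 := by
        rw [mul_smul, ← hc, smul_comm, hax, smul_zero]
      have h2 : a * d ∈ q := hy ▸ aux_mem_ann.mpr h1
      exact (hq.mem_or_mem h2).resolve_right hdq

variable (R) in
lemma aux_ass_finite [IsNoetherianRing R] : (associatedPrimes R R).Finite := by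
  have key : ∀ N : Ideal R, (associatedPrimes R (R ⧸ N)).Finite := by
    intro N
    induction N using IsNoetherian.induction with
    | _ N ih =>
      by_cases hN : Subsingleton (R ⧸ N)
      · rw [associatedPrimes.eq_empty_of_subsingleton]
        exact Set.finite_empty
      · have : Nontrivial (R ⧸ N) := not_subsingleton_iff_nontrivial.mp hN
        obtain ⟨p, hp'⟩ := associatedPrimes.nonempty R (R ⧸ N)
        obtain ⟨hp, xbar, hx⟩ := aux_iff.mp hp'
        obtain ⟨x, rfl⟩ := Submodule.Quotient.mk_surjective N xbar
        have hxne : (Submodule.Quotient.mk x : R ⧸ N) ≠ 0 := by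
          intro h
          apply hp.ne_top
          rw [hx, h]
          simp [Submodule.annihilator_eq_top_iff, Submodule.span_singleton_eq_bot]
        have hxN : x ∉ N := fun h => hxne (Submodule.Quotient.mk_eq_zero N |>.mpr h)
        set N' : Submodule R R := N ⊔ Submodule.span R {x} with hN'
        have hlt : N < N' := by
          refine lt_of_le_of_ne le_sup_left (fun h => hxN ?_)
          rw [h]
          exact Submodule.mem_sup_right (Submodule.mem_span_singleton_self x)
        have hmap : Submodule.map N.mkQ N' =
            Submodule.span R {(Submodule.Quotient.mk x : R ⧸ N)} := by
          rw [hN', Submodule.map_sup, Submodule.map_span, Set.image_singleton]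
          have h0 : Submodule.map N.mkQ N = ⊥ := Submodule.mkQ_map_self N
          rw [h0, bot_sup_eq]
          rfl
        have hequiv : ((R ⧸ N) ⧸ Submodule.span R {(Submodule.Quotient.mk x : R ⧸ N)})
            ≃ₗ[R] R ⧸ N' := by
          rw [← hmap]
          exact Submodule.quotientQuotientEquivQuotient N N' le_sup_left
        have hsub := aux_ass_subset (Submodule.Quotient.mk x : R ⧸ N) hp hx
        rw [LinearEquiv.AssociatedPrimes.eq hequiv] at hsub
        exact Set.Finite.subset ((ih N' hlt).insert p) hsub
  have e : (R ⧸ (⊥ : Ideal R)) ≃ₗ[R] R := Submodule.quotEquivOfEqBot ⊥ rfl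
  rw [← LinearEquiv.AssociatedPrimes.eq e]
  exact key ⊥

lemma aux_zd_le_ass [IsNoetherianRing R] {I : Ideal R}
    (h : ∀ r ∈ I, r ∉ nonZeroDivisors R) :
    ∃ q, IsAssociatedPrime q R ∧ I ≤ q := by
  classical
  have hfin := aux_ass_finite R
  have hsub : (I : Set R) ⊆ ⋃ p ∈ hfin.toFinset, ((id p : Ideal R) : Set R) := by
    intro r hr
    have hmem : r ∈ {r : R | ∃ x : R, x ≠ 0 ∧ r • x = 0} := by
      have h' := h r hr
      rw [mem_nonZeroDivisors_iff_right] at h'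
      push_neg at h'
      obtain ⟨x, hx1, hx2⟩ := h'
      exact ⟨x, hx2, by rw [smul_eq_mul, mul_comm]; exact hx1⟩
    rw [← biUnion_associatedPrimes_eq_zero_divisors R R] at hmem
    simpa [Set.Finite.coe_toFinset] using hmem
  have hres := (Ideal.subset_union_prime (⊥ : Ideal R) ⊥
    (fun i hi _ _ => (hfin.mem_toFinset.mp hi).isPrime)).mp hsub
  obtain ⟨q, hq, hle⟩ := hres
  exact ⟨q, hfin.mem_toFinset.mp hq, hle⟩

lemma aux_nzd_notmem [IsNoetherianRing R] {s : R} (hs : s ∈ nonZeroDivisors R) {q : Ideal R}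
    (hq : IsAssociatedPrime q R) : s ∉ q := by
  obtain ⟨hqp, w, hw⟩ := aux_iff.mp hq
  have hw0 : w ≠ 0 := by
    rintro rfl
    apply hqp.ne_top
    rw [hw]
    simp [Submodule.annihilator_eq_top_iff, Submodule.span_singleton_eq_bot]
  intro hmem
  have h0 : s • w = 0 := aux_mem_ann.mp (hw ▸ hmem)
  exact hw0 ((mem_nonZeroDivisors_iff_right.mp hs) w (by rwa [smul_eq_mul, mul_comm] at h0))

end AssAux

section ResAux
variable {R : Type*} [CommRing R] (p : Ideal R) [p.IsPrime]

local notation "K" => IsLocalRing.ResidueField (Localization.AtPrime p)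

lemma aux_g_zero_iff (a : R) : algebraMap R K a = 0 ↔ a ∈ p := by
  rw [IsScalarTower.algebraMap_apply R (Localization.AtPrime p) K,
    IsLocalRing.ResidueField.algebraMap_eq]
  have h1 : IsLocalRing.residue (Localization.AtPrime p) (algebraMap R (Localization.AtPrime p) a)
      = 0 ↔ algebraMap R (Localization.AtPrime p) a ∈
        IsLocalRing.maximalIdeal (Localization.AtPrime p) := Ideal.Quotient.eq_zero_iff_mem
  rw [h1]
  have h2 := Localization.AtPrime.comap_maximalIdeal (I := p)
  constructor
  · intro h; rw [← h2]; exact h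
  · intro h; rw [← h2] at h; exact h

lemma aux_rep (c : K) : ∃ a s : R, s ∉ p ∧ algebraMap R K s * c = algebraMap R K a := by
  obtain ⟨z, hz⟩ := IsLocalRing.residue_surjective c
  obtain ⟨⟨a, s⟩, hs⟩ := IsLocalization.mk'_surjective p.primeCompl z
  refine ⟨a, s, s.2, ?_⟩
  rw [← hz, IsScalarTower.algebraMap_apply R (Localization.AtPrime p) K,
    IsScalarTower.algebraMap_apply R (Localization.AtPrime p) K,
    IsLocalRing.ResidueField.algebraMap_eq, ← map_mul, mul_comm, ← hs,
    IsLocalization.mk'_spec]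

end ResAux

section SatAux
variable {R M : Type} [CommRing R] [AddCommGroup M] [Module R M]

/-- The saturation of `W` with respect to a submonoid `T`. -/
def auxSat (T : Submonoid R) (W : Submodule R M) : Submodule R M where
  carrier := {x | ∃ s ∈ T, s • x ∈ W}
  zero_mem' := ⟨1, T.one_mem, by simp⟩
  add_mem' := by
    rintro x y ⟨s, hs, hsx⟩ ⟨t, ht, hty⟩
    refine ⟨s * t, T.mul_mem hs ht, ?_⟩
    have h : (s * t) • (x + y) = t • (s • x) + s • (t • y) := by
      rw [smul_add, mul_smul, smul_comm s t x, mul_smul s t y]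
    rw [h]
    exact W.add_mem (W.smul_mem t hsx) (W.smul_mem s hty)
  smul_mem' := by
    rintro c x ⟨s, hs, hsx⟩
    exact ⟨s, hs, by rw [smul_comm]; exact W.smul_mem c hsx⟩

lemma aux_mem_sat {T : Submonoid R} {W : Submodule R M} {x : M} :
    x ∈ auxSat T W ↔ ∃ s ∈ T, s • x ∈ W := Iff.rfl

lemma aux_sat_eq_top
    (hquot : ∀ U : Submodule R M, U ≠ ⊥ → U ≠ ⊤ → ¬ IsTorsionFreeMod R (M ⧸ U))
    {T : Submonoid R} (hT : ∀ r ∈ nonZeroDivisors R, r ∈ T)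
    {W : Submodule R M} (hW : auxSat T W ≠ ⊥) : auxSat T W = ⊤ := by
  by_contra hne
  apply hquot _ hW hne
  intro r y hr hry
  obtain ⟨x, rfl⟩ := Submodule.Quotient.mk_surjective _ y
  rw [← Submodule.Quotient.mk_smul, Submodule.Quotient.mk_eq_zero] at hry
  obtain ⟨s, hs, hsx⟩ := hry
  rw [Submodule.Quotient.mk_eq_zero]
  exact ⟨s * r, T.mul_mem hs (hT r hr), by rwa [mul_smul]⟩

end SatAux

/-- Over a Noetherian local ring `R`, a module `M ≠ 0` is simple torsion-free iff
`M` embeds into `κ(p) = R_p/(p R_p)` for some maximal element `p` of `Ass(R)`. -/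
theorem stmt12 (R : Type) [CommRing R] [IsNoetherianRing R] [IsLocalRing R]
    (M : Type) [AddCommGroup M] [Module R M] (hM : ∃ x : M, x ≠ 0) :
    SimpleTorsionFree R M ↔
      ∃ (p : Ideal R) (_ : p.IsPrime),
        IsAssociatedPrime p R ∧
        (∀ q : Ideal R, IsAssociatedPrime q R → p ≤ q → q = p) ∧
        ∃ f : M →ₗ[R] IsLocalRing.ResidueField (Localization.AtPrime p),
          Function.Injective f := by
  classical
  constructor
  · intro h
    obtain ⟨-, hTF, hquot⟩ := h
    obtain ⟨x0, hx0⟩ := hM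
    haveI : Nontrivial M := ⟨⟨x0, 0, hx0⟩⟩
    obtain ⟨p, hp'⟩ := associatedPrimes.nonempty R M
    obtain ⟨hp, u, hpu⟩ := aux_iff.mp hp'
    haveI := hp
    have hu0 : u ≠ 0 := by
      rintro rfl
      apply hp.ne_top
      rw [hpu]
      simp [Submodule.annihilator_eq_top_iff, Submodule.span_singleton_eq_bot]
    have hpu' : ∀ a : R, a ∈ p ↔ a • u = 0 := fun a => by rw [hpu, aux_mem_ann]
    have hnzp : ∀ s ∈ nonZeroDivisors R, s ∉ p :=
      fun s hs hsp => hu0 (hTF s u hs ((hpu' s).mp hsp))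
    -- Step A : divisibility by nonzerodivisors into Ru
    have hdiv : ∀ x : M, ∃ s a : R, s ∈ nonZeroDivisors R ∧ s • x = a • u := by
      intro x
      have hWu : auxSat (nonZeroDivisors R) (Submodule.span R {u}) = ⊤ := by
        apply aux_sat_eq_top hquot (fun r hr => hr)
        intro hbot
        apply hu0
        have hmem : u ∈ auxSat (nonZeroDivisors R) (Submodule.span R {u}) :=
          ⟨1, one_mem _, by rw [one_smul]; exact Submodule.mem_span_singleton_self u⟩
        rwa [hbot, Submodule.mem_bot] at hmem
      have hx : x ∈ auxSat (nonZeroDivisors R) (Submodule.span R {u}) := by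
        rw [hWu]; trivial
      obtain ⟨s, hs, hsx⟩ := hx
      obtain ⟨a, ha⟩ := Submodule.mem_span_singleton.mp hsx
      exact ⟨s, a, hs, ha.symm⟩
    choose sf af hsf using hdiv
    set g := algebraMap R (IsLocalRing.ResidueField (Localization.AtPrime p)) with hgdef
    have hgz : ∀ a : R, g a = 0 ↔ a ∈ p := aux_g_zero_iff p
    have hgs0 : ∀ x : M, g (sf x) ≠ 0 := fun x hzero => hnzp _ (hsf x).1 ((hgz _).mp hzero)
    -- uniqueness of the fraction
    have key : ∀ (x : M) (s a : R), s ∉ p → s • x = a • u →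
        g a * (g s)⁻¹ = g (af x) * (g (sf x))⁻¹ := by
      intro x s a hs hsa
      have h1 : (sf x * a) • u = (s * af x) • u := by
        rw [mul_smul, ← hsa, smul_comm, (hsf x).2, ← mul_smul]
      have h2 : sf x * a - s * af x ∈ p :=
        (hpu' _).mpr (by rw [sub_smul, h1, sub_self])
      have h3 : g (sf x * a) = g (s * af x) := by
        have h4 := (hgz _).mpr h2
        rwa [map_sub, sub_eq_zero] at h4
      rw [map_mul, map_mul] at h3
      have hs0 : g s ≠ 0 := fun hzero => hs ((hgz s).mp hzero)
      field_simp [hs0, hgs0 x]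
      linear_combination h3
    -- Step C : maximality of p among associated primes of R
    have hmax : ∀ q : Ideal R, IsAssociatedPrime q R → p ≤ q → q = p := by
      intro q hqAss hpq
      by_contra hne
      have hbex : ∃ b ∈ q, b ∉ p := by
        by_contra hc
        push_neg at hc
        exact hne (le_antisymm hc hpq)
      obtain ⟨b, hbq, hbp⟩ := hbex
      haveI hqprime := hqAss.isPrime
      have hU1 : auxSat q.primeCompl (Submodule.span R {u}) = ⊤ := by
        apply aux_sat_eq_top hquot (fun r hr => aux_nzd_notmem hr hqAss)
        intro hbot
        apply hu0
        have hmem : u ∈ auxSat q.primeCompl (Submodule.span R {u}) :=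
          ⟨1, q.primeCompl.one_mem, by
            rw [one_smul]; exact Submodule.mem_span_singleton_self u⟩
        rwa [hbot, Submodule.mem_bot] at hmem
      have hbu0 : b • u ≠ 0 := fun hzero => hbp ((hpu' b).mpr hzero)
      have hU2 : auxSat (nonZeroDivisors R) (Submodule.map (LinearMap.lsmul R M b) ⊤) = ⊤ := by
        apply aux_sat_eq_top hquot (fun r hr => hr)
        intro hbot
        apply hbu0
        have hmem : b • u ∈ auxSat (nonZeroDivisors R)
            (Submodule.map (LinearMap.lsmul R M b) ⊤) :=
          ⟨1, one_mem _, by rw [one_smul]; exact ⟨u, trivial, rfl⟩⟩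
        rwa [hbot, Submodule.mem_bot] at hmem
      have hu2 : u ∈ auxSat (nonZeroDivisors R) (Submodule.map (LinearMap.lsmul R M b) ⊤) := by
        rw [hU2]; trivial
      obtain ⟨s, hs, hsy⟩ := hu2
      obtain ⟨y, -, hy⟩ := hsy
      have hy' : b • y = s • u := hy
      have hu1 : y ∈ auxSat q.primeCompl (Submodule.span R {u}) := by
        rw [hU1]; trivial
      obtain ⟨t, ht, hty⟩ := hu1
      obtain ⟨a, ha⟩ := Submodule.mem_span_singleton.mp hty
      have hcombo : (t * s) • u = (b * a) • u := by
        rw [mul_smul, ← hy', smul_comm t b y, ← ha, smul_smul]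
      have hmemp : t * s - b * a ∈ p :=
        (hpu' _).mpr (by rw [sub_smul, hcombo, sub_self])
      have hts : t * s ∈ q := by
        have h1 : t * s = (t * s - b * a) + b * a := by ring
        rw [h1]
        exact q.add_mem (hpq hmemp) (q.mul_mem_right a hbq)
      rcases hqprime.mem_or_mem hts with hmm | hmm
      · exact ht hmm
      · exact aux_nzd_notmem hs hqAss hmm
    -- p is an associated prime of R
    have hpz : ∀ c ∈ p, c ∉ nonZeroDivisors R := fun c hc hcn => hnzp c hcn hc
    obtain ⟨q, hqAss, hpq⟩ := aux_zd_le_ass hpz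
    have hpAss : IsAssociatedPrime p R := (hmax q hqAss hpq) ▸ hqAss
    -- the embedding
    refine ⟨p, hp, hpAss, hmax, ?_⟩
    have hadd : ∀ x y : M,
        g (af (x + y)) * (g (sf (x + y)))⁻¹ =
          g (af x) * (g (sf x))⁻¹ + g (af y) * (g (sf y))⁻¹ := by
      intro x y
      have hsxy : sf x * sf y ∉ p := hnzp _ (mul_mem (hsf x).1 (hsf y).1)
      have heq : (sf x * sf y) • (x + y) = (sf y * af x + sf x * af y) • u := by
        have h1 : (sf x * sf y) • (x + y) = sf y • (sf x • x) + sf x • (sf y • y) := by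
          rw [smul_add, mul_smul, smul_comm (sf x) (sf y) x, mul_smul (sf x) (sf y) y]
        rw [h1, (hsf x).2, (hsf y).2, smul_smul, smul_smul, ← add_smul]
      have hk := key (x + y) _ _ hsxy heq
      rw [← hk, map_add, map_mul, map_mul, map_mul]
      field_simp [hgs0 x, hgs0 y]
    have hsmul : ∀ (c : R) (x : M),
        g (af (c • x)) * (g (sf (c • x)))⁻¹ = g c * (g (af x) * (g (sf x))⁻¹) := by
      intro c x
      have heqc : sf x • (c • x) = (c * af x) • u := by
        rw [smul_comm, (hsf x).2, smul_smul]
      have hk := key (c • x) (sf x) (c * af x) (hnzp _ (hsf x).1) heqc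
      rw [← hk, map_mul]
      ring
    set f : M →ₗ[R] IsLocalRing.ResidueField (Localization.AtPrime p) :=
      { toFun := fun x => g (af x) * (g (sf x))⁻¹
        map_add' := hadd
        map_smul' := by
          intro c x
          simp only [RingHom.id_apply]
          rw [hsmul c x, Algebra.smul_def] } with hfdef
    refine ⟨f, ?_⟩
    rw [injective_iff_map_eq_zero]
    intro x h0
    have hfx : g (af x) * (g (sf x))⁻¹ = 0 := h0
    have hga : g (af x) = 0 := by
      rcases mul_eq_zero.mp hfx with hz | hz
      · exact hz
      · exact absurd (inv_eq_zero.mp hz) (hgs0 x)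
    have hap : af x ∈ p := (hgz _).mp hga
    have h1 : sf x • x = 0 := by rw [(hsf x).2]; exact (hpu' _).mp hap
    exact hTF _ x (hsf x).1 h1
  · rintro ⟨p, hp, hpAss, hpmax, f, hf⟩
    have hf0 : ∀ x : M, f x = 0 → x = 0 := fun x hx => hf (by rw [hx, map_zero])
    have hgz := aux_g_zero_iff p
    have hTF : IsTorsionFreeMod R M := by
      intro r x hr hrx
      have h1 : algebraMap R (IsLocalRing.ResidueField (Localization.AtPrime p)) r * f x = 0 := by
        rw [← Algebra.smul_def, ← map_smul, hrx, map_zero]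
      have h2 : algebraMap R (IsLocalRing.ResidueField (Localization.AtPrime p)) r ≠ 0 := fun h => aux_nzd_notmem hr hpAss ((hgz r).mp h)
      exact hf0 x ((mul_eq_zero.mp h1).resolve_left h2)
    refine ⟨hM, hTF, ?_⟩
    intro U hUb hUt hq
    obtain ⟨u, huU, hu0⟩ := Submodule.ne_bot_iff U |>.mp hUb
    have hxex : ∃ x : M, x ∉ U := by
      by_contra h
      push_neg at h
      exact hUt (Submodule.eq_top_iff'.mpr h)
    obtain ⟨x, hxU⟩ := hxex
    set I : Ideal R := U.comap (LinearMap.toSpanSingleton R M x) with hI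
    have hmemI : ∀ r : R, r ∈ I ↔ r • x ∈ U := fun r => Iff.rfl
    -- every element of I is a zerodivisor
    have hIzd : ∀ r ∈ I, r ∉ nonZeroDivisors R := by
      intro r hrI hrnz
      apply hxU
      have h1 : r • (Submodule.Quotient.mk x : M ⧸ U) = 0 := by
        rw [← Submodule.Quotient.mk_smul, Submodule.Quotient.mk_eq_zero]
        exact (hmemI r).mp hrI
      have h2 := hq r (Submodule.Quotient.mk x) hrnz h1
      rwa [Submodule.Quotient.mk_eq_zero] at h2
    obtain ⟨q, hqAss, hIq⟩ := aux_zd_le_ass hIzd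
    -- p ≤ I
    have hpI : p ≤ I := by
      intro c hc
      have h1 : f (c • x) = 0 := by
        rw [map_smul, Algebra.smul_def, (hgz c).mpr hc, zero_mul]
      have h2 := hf0 _ h1
      rw [hmemI, h2]
      exact U.zero_mem
    -- there is s ∈ I with s ∉ p
    have hfu : f u ≠ 0 := fun h => hu0 (hf0 u h)
    obtain ⟨a, s, hsp, hrep⟩ := aux_rep p (f x * (f u)⁻¹)
    have h2 : algebraMap R (IsLocalRing.ResidueField (Localization.AtPrime p)) s * f x = algebraMap R (IsLocalRing.ResidueField (Localization.AtPrime p)) a * f u := by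
      field_simp at hrep
      exact hrep.trans (mul_comm _ _)
    have hsxau : s • x = a • u := by
      have h3 : f (s • x - a • u) = 0 := by
        rw [map_sub, map_smul, map_smul, Algebra.smul_def, Algebra.smul_def, h2, sub_self]
      have h4 := hf0 _ h3
      rwa [sub_eq_zero] at h4
    have hsI : s ∈ I := by
      rw [hmemI, hsxau]
      exact U.smul_mem a huU
    have : q = p := hpmax q hqAss (le_trans hpI hIq)
    exact hsp (this ▸ hIq hsI)
end

section
/- Let R be a Noetherian local ring. For an R-module M the following are equivalent: (i) M is simple torsion-free and divisible; (ii) M is torsion-free and simple divisible; (iii) M ≅ κ(p) for some maximal element p of Ass(R). -/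
/-- A module is divisible if `rN = N` for every non-zerodivisor `r` of `R`. -/
def IsDivisibleMod (R N : Type) [CommRing R] [AddCommGroup N] [Module R N] : Prop :=
  ∀ r ∈ nonZeroDivisors R, ∀ x : N, ∃ y : N, r • y = x

/-- A submodule `V` is divisible if `rV = V` for every non-zerodivisor `r`. -/
def IsDivisibleSub (R : Type) {N : Type} [CommRing R] [AddCommGroup N] [Module R N]
    (V : Submodule R N) : Prop :=
  ∀ r ∈ nonZeroDivisors R, ∀ x ∈ V, ∃ y ∈ V, r • y = x

/-- `N` is simple divisible if `N ≠ 0` is divisible and no submodule `0 ≠ V ⊊ N`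
is divisible. -/
def SimpleDivisible (R N : Type) [CommRing R] [AddCommGroup N] [Module R N] : Prop :=
  (∃ x : N, x ≠ 0) ∧ IsDivisibleMod R N ∧
    ∀ V : Submodule R N, V ≠ ⊥ → V ≠ ⊤ → ¬ IsDivisibleSub R V



open Ideal in
/-- In a Noetherian ring, an ideal consisting of zerodivisors is contained in an
associated prime of `R`. -/
lemma exists_assoc_ge {R : Type} [CommRing R] [IsNoetherianRing R] {I : Ideal R}
    (hI : ∀ a ∈ I, a ∉ nonZeroDivisors R) :
    ∃ q : Ideal R, IsAssociatedPrime q R ∧ I ≤ q := by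
  classical
  obtain ⟨t, htinf, htprim, -, htirr⟩ : ∃ t : Finset (Ideal R), Submodule.IsMinimalPrimaryDecomposition (⊥ : Ideal R) t := Submodule.IsLasker.exists_isMinimalPrimaryDecomposition (Submodule.isLasker R R) (⊥ : Ideal R)
  have hcover : (I : Set R) ⊆ ⋃ Q ∈ (t : Set (Ideal R)), (Ideal.radical Q : Set R) := by
    intro a ha
    have h1 : a ∉ nonZeroDivisors R := hI a ha
    rw [mem_nonZeroDivisors_iff_right] at h1
    push_neg at h1
    obtain ⟨z, hz, hz0⟩ := h1
    have hznot : ¬ ∀ Q ∈ t, z ∈ Q := by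
      intro h
      have hzinf : z ∈ t.inf id := Submodule.mem_finsetInf.mpr (by simpa using h)
      rw [htinf] at hzinf
      exact hz0 (by simpa using hzinf)
    push_neg at hznot
    obtain ⟨Q, hQt, hzQ⟩ := hznot
    have hza : z * a ∈ Q := by rw [hz]; exact Q.zero_mem
    have : a ∈ Q.radical := ((Ideal.isPrimary_iff.mp (htprim hQt)).2 hza).resolve_left hzQ
    exact Set.mem_biUnion hQt this
  obtain ⟨Q, hQt, hIQ⟩ :=
    (Ideal.subset_union_prime (f := Ideal.radical) ⊥ ⊥
      (fun i hi _ _ => Ideal.isPrime_radical (htprim hi))).mp hcover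
  -- irredundancy gives a nonzero z in the intersection of the other components
  obtain ⟨z, hzerase, hzQ⟩ := SetLike.not_le_iff_exists.mp (htirr hQt)
  have hz0 : z ≠ 0 := fun h => hzQ (h ▸ Q.zero_mem)
  -- J is the annihilator of z
  set J : Ideal R := LinearMap.ker (LinearMap.toSpanSingleton R R z) with hJ
  have hmemJ : ∀ a : R, a ∈ J ↔ a * z = 0 := by
    intro a
    simp [hJ, LinearMap.mem_ker, LinearMap.toSpanSingleton_apply, smul_eq_mul]
  have hmulbot : ∀ a : R, a * z ∈ Q → a ∈ J := by
    intro a haQ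
    rw [hmemJ]
    have : a * z ∈ t.inf id := by
      rw [Submodule.mem_finsetInf]
      intro P hPt
      by_cases hPQ : P = Q
      · subst hPQ; exact haQ
      · have hzP : z ∈ P := by
          have := Submodule.mem_finsetInf.mp hzerase P (Finset.mem_erase.mpr ⟨hPQ, hPt⟩)
          simpa using this
        exact Ideal.mul_mem_left P a hzP
    rw [htinf] at this
    simpa using this
  have hQJ : Q ≤ J := fun q hq => hmulbot q (Ideal.mul_mem_right z Q hq)
  have hJrad : J ≤ Q.radical := by
    intro a haJ
    have : z * a ∈ Q := by rw [mul_comm, (hmemJ a).mp haJ]; exact Q.zero_mem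
    exact ((Ideal.isPrimary_iff.mp (htprim hQt)).2 this).resolve_left hzQ
  have hradJQ : J.radical = Q.radical :=
    le_antisymm (by simpa [Ideal.radical_idem] using Ideal.radical_mono hJrad)
      (Ideal.radical_mono hQJ)
  have hJprim : J.IsPrimary := by
    rw [Ideal.isPrimary_iff]
    constructor
    · rw [Ne, Ideal.eq_top_iff_one, hmemJ, one_mul]
      exact hz0
    · intro x y hxy
      have h1 : (x * z) * y ∈ Q := by
        have : x * y * z = 0 := (hmemJ _).mp hxy
        rw [show (x * z) * y = x * y * z by ring, this]; exact Q.zero_mem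
      rcases (Ideal.isPrimary_iff.mp (htprim hQt)).2 h1 with h | h
      · exact Or.inl (hmulbot x h)
      · exact Or.inr (hradJQ ▸ h)
  have hass : IsAssociatedPrime J.radical (R ⧸ J) := by
    have := associatedPrimes.eq_singleton_of_isPrimary hJprim
    have : J.radical ∈ associatedPrimes R (R ⧸ J) := by rw [this]; rfl
    exact this
  have hinj : Function.Injective (J.liftQ (LinearMap.toSpanSingleton R R z) le_rfl) :=
    LinearMap.ker_eq_bot.mp (Submodule.ker_liftQ_eq_bot' J _ rfl)
  exact ⟨J.radical, hass.map_of_injective _ hinj, hradJQ ▸ hIQ⟩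
lemma assoc_not_nzd {R : Type} [CommRing R] {q : Ideal R} (hq : IsAssociatedPrime q R) :
    ∀ a ∈ q, a ∉ nonZeroDivisors R := by
  obtain ⟨hqp, z, hz⟩ := hq
  have hz0 : z ≠ 0 := by
    rintro rfl
    apply hqp.ne_top
    rw [hz, Ideal.radical_eq_top, Ideal.eq_top_iff_one, Submodule.mem_colon_singleton]
    simp
  intro a ha hnzd
  rw [hz, Ideal.mem_radical_iff] at ha
  obtain ⟨n, hn⟩ := ha
  rw [Submodule.mem_colon_singleton, Submodule.mem_bot, smul_eq_mul] at hn
  exact hz0 (mem_nonZeroDivisors_iff_right.mp (pow_mem hnzd n) z (by rw [mul_comm]; exact hn))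

lemma s_trick {R : Type} [CommRing R] [IsNoetherianRing R] {p : Ideal R}
    (hmax : ∀ q : Ideal R, IsAssociatedPrime q R → p ≤ q → q = p) {t : R} (ht : t ∉ p) :
    ∃ s ∈ nonZeroDivisors R, ∃ c : R, s - t * c ∈ p := by
  by_contra hcon
  push_neg at hcon
  have hall : ∀ a ∈ Ideal.span {t} ⊔ p, a ∉ nonZeroDivisors R := by
    intro a ha hnzd
    obtain ⟨u, hu, v, hv, rfl⟩ := Submodule.mem_sup.mp ha
    obtain ⟨c, rfl⟩ := Ideal.mem_span_singleton'.mp hu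
    exact hcon _ hnzd c (by simpa [mul_comm] using hv)
  obtain ⟨q, hq, hle⟩ := exists_assoc_ge hall
  have hpq : p ≤ q := le_trans le_sup_right hle
  have htq : t ∈ q := hle ((le_sup_left : Ideal.span {t} ≤ Ideal.span {t} ⊔ p) (Ideal.subset_span rfl))
  rw [hmax q hq hpq] at htq
  exact ht htq

section Kappa
variable {R : Type} [CommRing R] (p : Ideal R) [p.IsPrime]

lemma kappa_map_zero_iff (r : R) :
    algebraMap R (IsLocalRing.ResidueField (Localization.AtPrime p)) r = 0 ↔ r ∈ p := by
  rw [IsScalarTower.algebraMap_apply R (Localization.AtPrime p)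
        (IsLocalRing.ResidueField (Localization.AtPrime p)) r,
    IsLocalRing.ResidueField.algebraMap_eq, IsLocalRing.residue_eq_zero_iff]
  conv_rhs => rw [← Localization.AtPrime.comap_maximalIdeal (I := p)]
  rw [Ideal.mem_comap]

lemma kappa_repr (u : IsLocalRing.ResidueField (Localization.AtPrime p)) :
    ∃ (b t : R), t ∉ p ∧
      algebraMap R (IsLocalRing.ResidueField (Localization.AtPrime p)) t * u =
      algebraMap R (IsLocalRing.ResidueField (Localization.AtPrime p)) b := by
  obtain ⟨v, rfl⟩ := IsLocalRing.residue_surjective u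
  obtain ⟨⟨b, t⟩, hv⟩ := IsLocalization.mk'_surjective p.primeCompl v
  refine ⟨b, t, t.2, ?_⟩
  rw [IsScalarTower.algebraMap_apply R (Localization.AtPrime p)
        (IsLocalRing.ResidueField (Localization.AtPrime p)),
      IsScalarTower.algebraMap_apply R (Localization.AtPrime p)
        (IsLocalRing.ResidueField (Localization.AtPrime p)),
      IsLocalRing.ResidueField.algebraMap_eq, ← map_mul, ← hv, IsLocalization.mk'_spec']

end Kappa

section KappaAll
variable {R : Type} [CommRing R] [IsNoetherianRing R] {p : Ideal R} [p.IsPrime]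

lemma kappa_all (hass : IsAssociatedPrime p R)
    (hmax : ∀ q : Ideal R, IsAssociatedPrime q R → p ≤ q → q = p) :
    IsTorsionFreeMod R (IsLocalRing.ResidueField (Localization.AtPrime p)) ∧
    SimpleDivisible R (IsLocalRing.ResidueField (Localization.AtPrime p)) := by
  set K := IsLocalRing.ResidueField (Localization.AtPrime p) with hK
  set f := algebraMap R K with hf
  have hfs : ∀ s ∈ nonZeroDivisors R, f s ≠ 0 := fun s hs h0 =>
    assoc_not_nzd hass s ((kappa_map_zero_iff p s).mp h0) hs
  have hTF : IsTorsionFreeMod R K := by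
    intro r x hr hrx
    rw [Algebra.smul_def] at hrx
    rcases mul_eq_zero.mp hrx with h | h
    · exact absurd h (hfs r hr)
    · exact h
  have hDiv : IsDivisibleMod R K := by
    intro r hr x
    exact ⟨(f r)⁻¹ * x, by
      rw [Algebra.smul_def, ← mul_assoc, mul_inv_cancel₀ (hfs r hr), one_mul]⟩
  refine ⟨hTF, ⟨1, one_ne_zero⟩, hDiv, ?_⟩
  intro V hVbot hVtop hdiv
  apply hVtop
  obtain ⟨v, hvV, hv0⟩ := Submodule.ne_bot_iff V |>.mp hVbot
  rw [Submodule.eq_top_iff']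
  intro u
  obtain ⟨b, t, ht, hbt⟩ := kappa_repr p (u * v⁻¹)
  obtain ⟨s, hs, c, hsc⟩ := s_trick hmax ht
  obtain ⟨x₀, hx₀V, hx₀⟩ := hdiv s hs ((b * c) • v) (V.smul_mem _ hvV)
  suffices h : x₀ = u by rwa [← h]
  have hfsc : f s = f t * f c := by
    have h0 : f (s - t * c) = 0 := (kappa_map_zero_iff p _).mpr hsc
    rw [map_sub, map_mul, sub_eq_zero] at h0
    exact h0
  have hfc : f c ≠ 0 := fun h => hfs s hs (by rw [hfsc, h, mul_zero])
  have hft : f t ≠ 0 := fun h => hfs s hs (by rw [hfsc, h, zero_mul])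
  rw [Algebra.smul_def, Algebra.smul_def] at hx₀
  have h1 : f t * x₀ * f c = f b * v * f c := by
    have : f (b * c) = f b * f c := map_mul f b c
    calc f t * x₀ * f c = (f t * f c) * x₀ := by ring
    _ = f s * x₀ := by rw [← hfsc]
    _ = f (b * c) * v := hx₀
    _ = f b * v * f c := by rw [this]; ring
  have h2 : f t * x₀ = f b * v := mul_right_cancel₀ hfc h1
  have h3 : f t * u = f b * v := by
    calc f t * u = f t * (u * v⁻¹) * v := by rw [mul_assoc, mul_assoc, inv_mul_cancel₀ hv0, mul_one]
    _ = f b * v := by rw [hbt]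
  exact mul_left_cancel₀ hft (h2.trans h3.symm)

end KappaAll

section Forward
variable {R M : Type} [CommRing R] [IsNoetherianRing R] [AddCommGroup M] [Module R M]

lemma forward_main (hTF : IsTorsionFreeMod R M) (hSD : SimpleDivisible R M) :
    ∃ (p : Ideal R) (_ : p.IsPrime),
      IsAssociatedPrime p R ∧
      (∀ q : Ideal R, IsAssociatedPrime q R → p ≤ q → q = p) ∧
      Nonempty (M ≃ₗ[R] IsLocalRing.ResidueField (Localization.AtPrime p)) := by
  classical
  obtain ⟨⟨x₀, hx₀⟩, hDiv, hSimp⟩ := hSD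
  haveI : Nontrivial M := ⟨⟨x₀, 0, hx₀⟩⟩
  obtain ⟨p, hpAss⟩ := associatedPrimes.nonempty R M
  obtain ⟨hp, y, hy⟩ := (isAssociatedPrime_iff (I := p) (M := M)).mp hpAss
  have hmem : ∀ a : R, a ∈ p ↔ a • y = 0 := fun a => by
    rw [hy, Submodule.mem_colon_singleton, Submodule.mem_bot]
  have hy0 : y ≠ 0 := by
    rintro rfl
    exact hp.ne_top ((Ideal.eq_top_iff_one _).mpr ((hmem 1).mpr (smul_zero _)))
  have hpS : ∀ a ∈ p, a ∉ nonZeroDivisors R := fun a ha hnzd =>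
    hy0 (hTF a y hnzd ((hmem a).mp ha))
  -- `p` is maximal among ideals consisting of zerodivisors
  have hidealmax : ∀ q : Ideal R, p ≤ q → (∀ a ∈ q, a ∉ nonZeroDivisors R) → q = p := by
    intro q hpq hqS
    by_contra hne
    obtain ⟨b, hbq, hbp⟩ := SetLike.exists_of_lt (lt_of_le_of_ne hpq (Ne.symm hne))
    set W : Submodule R M :=
      { carrier := {x | ∃ s ∈ nonZeroDivisors R, ∃ a ∈ q, s • x = a • y}
        zero_mem' := ⟨1, one_mem _, 0, q.zero_mem, by simp⟩
        add_mem' := by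
          rintro x x' ⟨s, hs, a, ha, hx⟩ ⟨s', hs', a', ha', hx'⟩
          refine ⟨s * s', mul_mem hs hs', s' * a + s * a',
            q.add_mem (q.mul_mem_left _ ha) (q.mul_mem_left _ ha'), ?_⟩
          have e1 : (s * s') • x = (s' * a) • y := by
            rw [mul_comm, mul_smul, hx, ← mul_smul]
          have e2 : (s * s') • x' = (s * a') • y := by
            rw [mul_smul, hx', ← mul_smul]
          rw [smul_add, e1, e2, ← add_smul]
        smul_mem' := by
          rintro r x ⟨s, hs, a, ha, hx⟩
          exact ⟨s, hs, r * a, q.mul_mem_left _ ha,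
            by rw [smul_comm, hx, ← mul_smul]⟩ } with hW
    have hWbot : W ≠ ⊥ := by
      intro h
      have hbyW : b • y ∈ W := ⟨1, one_mem _, b, hbq, by rw [one_smul]⟩
      rw [h, Submodule.mem_bot] at hbyW
      exact hbp ((hmem b).mpr hbyW)
    have hWtop : W ≠ ⊤ := by
      intro h
      have hyW : y ∈ W := h ▸ Submodule.mem_top
      obtain ⟨s, hs, a, ha, hsy⟩ := hyW
      have hsa : s - a ∈ p := (hmem _).mpr (by rw [sub_smul, hsy, sub_self])
      have hsq : s ∈ q := by
        have := q.add_mem (hpq hsa) ha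
        simpa using this
      exact hqS s hsq hs
    have hWdiv : IsDivisibleSub R W := by
      rintro r hr x ⟨s, hs, a, ha, hx⟩
      obtain ⟨x₁, hx₁⟩ := hDiv r hr x
      exact ⟨x₁, ⟨s * r, mul_mem hs hr, a, ha, by rw [mul_smul, hx₁, hx]⟩, hx₁⟩
    exact hSimp W hWbot hWtop hWdiv
  have hpassR : IsAssociatedPrime p R := by
    obtain ⟨q, hq, hpq⟩ := exists_assoc_ge hpS
    exact (hidealmax q hpq (assoc_not_nzd hq)) ▸ hq
  have hmax : ∀ q : Ideal R, IsAssociatedPrime q R → p ≤ q → q = p :=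
    fun q hq hpq => hidealmax q hpq (assoc_not_nzd hq)
  -- every element is a "fraction" of y
  have hV : ∀ x : M, ∃ s ∈ nonZeroDivisors R, ∃ a : R, s • x = a • y := by
    set V : Submodule R M :=
      { carrier := {x | ∃ s ∈ nonZeroDivisors R, ∃ a : R, s • x = a • y}
        zero_mem' := ⟨1, one_mem _, 0, by simp⟩
        add_mem' := by
          rintro x x' ⟨s, hs, a, hx⟩ ⟨s', hs', a', hx'⟩
          refine ⟨s * s', mul_mem hs hs', s' * a + s * a', ?_⟩
          have e1 : (s * s') • x = (s' * a) • y := by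
            rw [mul_comm, mul_smul, hx, ← mul_smul]
          have e2 : (s * s') • x' = (s * a') • y := by
            rw [mul_smul, hx', ← mul_smul]
          rw [smul_add, e1, e2, ← add_smul]
        smul_mem' := by
          rintro r x ⟨s, hs, a, hx⟩
          exact ⟨s, hs, r * a, by rw [smul_comm, hx, ← mul_smul]⟩ } with hVdef
    have hVbot : V ≠ ⊥ := by
      intro h
      have hyV : y ∈ V := ⟨1, one_mem _, 1, by simp⟩
      rw [h, Submodule.mem_bot] at hyV
      exact hy0 hyV
    have hVdiv : IsDivisibleSub R V := by
      rintro r hr x ⟨s, hs, a, hx⟩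
      obtain ⟨x₁, hx₁⟩ := hDiv r hr x
      exact ⟨x₁, ⟨s * r, mul_mem hs hr, a, by rw [mul_smul, hx₁, hx]⟩, hx₁⟩
    intro x
    by_cases hVtop : V = ⊤
    · exact (hVtop ▸ Submodule.mem_top : x ∈ V)
    · exact absurd hVdiv (hSimp V hVbot hVtop)
  haveI : p.IsPrime := hp
  set K := IsLocalRing.ResidueField (Localization.AtPrime p) with hK
  set f := algebraMap R K with hf
  have hfs : ∀ s ∈ nonZeroDivisors R, f s ≠ 0 := fun s hs h0 =>
    hpS s ((kappa_map_zero_iff p s).mp h0) hs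
  choose sf hsf af haf using hV
  obtain ⟨ψ, hψ⟩ : ∃ ψ : M → K, ∀ x, ψ x = f (af x) / f (sf x) := ⟨_, fun _ => rfl⟩
  have key : ∀ (x : M) (s a : R), s ∈ nonZeroDivisors R → s • x = a • y →
      f s * ψ x = f a := by
    intro x s a hs hsx
    have h1 : (s * af x - sf x * a) • y = 0 := by
      rw [sub_smul, mul_smul, ← haf x, smul_comm, hsx, mul_smul, sub_self]
    have h3 : f (s * af x) - f (sf x * a) = 0 := by
      rw [← map_sub]
      exact (kappa_map_zero_iff p _).mpr ((hmem _).mpr h1)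
    rw [map_mul, map_mul, sub_eq_zero] at h3
    have hfsf : f (sf x) ≠ 0 := hfs _ (hsf x)
    rw [hψ x]
    rw [mul_div_assoc', div_eq_iff hfsf]
    linear_combination h3
  have psi_spec : ∀ x : M, f (sf x) * ψ x = f (af x) :=
    fun x => key x _ _ (hsf x) (haf x)
  have hadd : ∀ x x' : M, ψ (x + x') = ψ x + ψ x' := by
    intro x x'
    have e1 : (sf x * sf x') • x = (sf x' * af x) • y := by
      rw [mul_comm, mul_smul, haf x, ← mul_smul]
    have e2 : (sf x * sf x') • x' = (sf x * af x') • y := by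
      rw [mul_smul, haf x', ← mul_smul]
    have e : (sf x * sf x') • (x + x') = (sf x' * af x + sf x * af x') • y := by
      rw [smul_add, e1, e2, ← add_smul]
    have h := key (x + x') (sf x * sf x') (sf x' * af x + sf x * af x')
      (mul_mem (hsf x) (hsf x')) e
    have hne : f (sf x * sf x') ≠ 0 := hfs _ (mul_mem (hsf x) (hsf x'))
    apply mul_left_cancel₀ hne
    rw [h, map_add, map_mul, map_mul, map_mul]
    linear_combination (-(f (sf x'))) * psi_spec x - f (sf x) * psi_spec x'
  have hsmul : ∀ (r : R) (x : M), ψ (r • x) = r • ψ x := by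
    intro r x
    have e : sf x • (r • x) = (r * af x) • y := by
      rw [smul_comm, haf x, ← mul_smul]
    have h := key (r • x) (sf x) (r * af x) (hsf x) e
    rw [Algebra.smul_def]
    apply mul_left_cancel₀ (hfs _ (hsf x))
    rw [h, map_mul]
    linear_combination (-(f r)) * psi_spec x
  set Ψ : M →ₗ[R] K := { toFun := ψ, map_add' := hadd, map_smul' := hsmul } with hΨ
  have hzero : ∀ x : M, Ψ x = 0 → x = 0 := by
    intro x hx
    have h := psi_spec x
    rw [show ψ x = 0 from hx, mul_zero] at h
    have : af x ∈ p := (kappa_map_zero_iff p _).mp h.symm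
    have h4 : sf x • x = 0 := by rw [haf x, (hmem _).mp this]
    exact hTF _ _ (hsf x) h4
  have hinj : Function.Injective Ψ := (injective_iff_map_eq_zero Ψ).mpr hzero
  have hsurj : Function.Surjective Ψ := by
    intro u
    obtain ⟨b, t, ht, hbt⟩ := kappa_repr p u
    obtain ⟨s, hs, c, hsc⟩ := s_trick hmax ht
    obtain ⟨x, hx⟩ := hDiv s hs ((b * c) • y)
    refine ⟨x, ?_⟩
    have h := key x s (b * c) hs hx
    have hfsc : f s = f t * f c := by
      have h0 : f (s - t * c) = 0 := (kappa_map_zero_iff p _).mpr hsc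
      rw [map_sub, map_mul, sub_eq_zero] at h0
      exact h0
    have h2 : f s * u = f (b * c) := by
      rw [hfsc, map_mul]
      linear_combination f c * hbt
    exact mul_left_cancel₀ (hfs s hs) (h.trans h2.symm)
  exact ⟨p, hp, hpassR, hmax, ⟨LinearEquiv.ofBijective Ψ ⟨hinj, hsurj⟩⟩⟩

end Forward

section Transfer
variable {R M N : Type} [CommRing R] [AddCommGroup M] [Module R M]
  [AddCommGroup N] [Module R N]

lemma transfer (e : M ≃ₗ[R] N) (hTF : IsTorsionFreeMod R N) (hSD : SimpleDivisible R N) :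
    IsTorsionFreeMod R M ∧ SimpleDivisible R M := by
  obtain ⟨⟨x₀, hx₀⟩, hDiv, hSimp⟩ := hSD
  refine ⟨?_, ⟨e.symm x₀, fun h => hx₀ (by rw [← e.apply_symm_apply x₀, h, map_zero])⟩,
    ?_, ?_⟩
  · intro r x hr hx
    have h1 : r • e x = 0 := by rw [← map_smul, hx, map_zero]
    exact e.map_eq_zero_iff.mp (hTF r (e x) hr h1)
  · intro r hr x
    obtain ⟨z, hz⟩ := hDiv r hr (e x)
    exact ⟨e.symm z, by rw [← map_smul, hz, e.symm_apply_apply]⟩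
  · intro V hVb hVt hVdiv
    refine hSimp (V.map e.toLinearMap) ?_ ?_ ?_
    · obtain ⟨x, hxV, hx0⟩ := (Submodule.ne_bot_iff V).mp hVb
      refine (Submodule.ne_bot_iff _).mpr ⟨e x, Submodule.mem_map_of_mem hxV, fun h => hx0 ?_⟩
      exact e.map_eq_zero_iff.mp h
    · intro h
      apply hVt
      rw [Submodule.eq_top_iff']
      intro x
      have hx : e x ∈ V.map e.toLinearMap := h ▸ Submodule.mem_top
      obtain ⟨x', hx', hxx⟩ := hx
      rwa [← e.injective hxx]
    · rintro r hr z ⟨x, hxV, rfl⟩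
      obtain ⟨x₁, hx₁V, hx₁⟩ := hVdiv r hr x hxV
      exact ⟨e x₁, Submodule.mem_map_of_mem hx₁V, by rw [← map_smul, hx₁]; rfl⟩

end Transfer

/-- Over a Noetherian local ring `R`, for a module `M` TFAE:
(i) `M` is simple torsion-free and divisible;
(ii) `M` is torsion-free and simple divisible;
(iii) `M ≅ κ(p)` for some maximal element `p` of `Ass(R)`. -/
theorem stmt13 (R : Type) [CommRing R] [IsNoetherianRing R] [IsLocalRing R]
    (M : Type) [AddCommGroup M] [Module R M] :
    ((SimpleTorsionFree R M ∧ IsDivisibleMod R M) ↔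
      (IsTorsionFreeMod R M ∧ SimpleDivisible R M)) ∧
    ((SimpleTorsionFree R M ∧ IsDivisibleMod R M) ↔
      ∃ (p : Ideal R) (_ : p.IsPrime),
        IsAssociatedPrime p R ∧
        (∀ q : Ideal R, IsAssociatedPrime q R → p ≤ q → q = p) ∧
        Nonempty (M ≃ₗ[R] IsLocalRing.ResidueField (Localization.AtPrime p))) := by
  
  have iff1 : (SimpleTorsionFree R M ∧ IsDivisibleMod R M) ↔
      (IsTorsionFreeMod R M ∧ SimpleDivisible R M) := by
    constructor
    · rintro ⟨⟨hx, hTF, hq⟩, hDiv⟩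
      refine ⟨hTF, hx, hDiv, ?_⟩
      intro V hVb hVt hVdiv
      refine hq V hVb hVt ?_
      intro r xbar hr hrx
      obtain ⟨x, rfl⟩ := Submodule.Quotient.mk_surjective V xbar
      rw [← Submodule.Quotient.mk_smul, Submodule.Quotient.mk_eq_zero] at hrx
      obtain ⟨v, hvV, hveq⟩ := hVdiv r hr (r • x) hrx
      have h0 : r • (v - x) = 0 := by rw [smul_sub, hveq, sub_self]
      have hvx : v - x = 0 := hTF r (v - x) hr h0
      rw [sub_eq_zero] at hvx
      rw [Submodule.Quotient.mk_eq_zero]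
      exact hvx ▸ hvV
    · rintro ⟨hTF, hx, hDiv, hVsimp⟩
      refine ⟨⟨hx, hTF, ?_⟩, hDiv⟩
      intro U hUb hUt hUTF
      refine hVsimp U hUb hUt ?_
      intro r hr x hxU
      obtain ⟨v, hv⟩ := hDiv r hr x
      have h0 : r • (Submodule.Quotient.mk v : M ⧸ U) = 0 := by
        rw [← Submodule.Quotient.mk_smul, hv, Submodule.Quotient.mk_eq_zero]
        exact hxU
      have hmem := hUTF r _ hr h0
      rw [Submodule.Quotient.mk_eq_zero] at hmem
      exact ⟨v, hmem, hv⟩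
  refine ⟨iff1, ?_⟩
  rw [iff1]
  constructor
  · rintro ⟨hTF, hSD⟩
    exact forward_main hTF hSD
  · rintro ⟨p, hp, hass, hmax, ⟨e⟩⟩
    haveI := hp
    obtain ⟨hTFk, hSDk⟩ := kappa_all hass hmax
    exact transfer e hTFk hSDk
end

section
/- Let R be a Noetherian local ring and N a simple divisible R-module. If V ⊊ N is an Artinian submodule, then V is bounded (r₀V = 0 for some non-zerodivisor r₀), and there is a surjective R-module homomorphism N/V ↠ N. -/
open Pointwise

lemma mem_psmul {R M : Type} [CommRing R] [AddCommGroup M] [Module R M]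
    (a : R) (S : Submodule R M) (x : M) : x ∈ a • S ↔ ∃ y ∈ S, a • y = x :=
  Set.mem_smul_set

/-- Over a Noetherian local ring, if `N` is simple divisible and `V ⊊ N` is an
Artinian submodule, then `V` is bounded (`r₀ V = 0` for some non-zerodivisor `r₀`)
and there is a surjection `N/V ↠ N`. -/
theorem stmt15 (R : Type) [CommRing R] [IsNoetherianRing R] [IsLocalRing R]
    (N : Type) [AddCommGroup N] [Module R N] (hN : SimpleDivisible R N)
    (V : Submodule R N) (hV : V ≠ ⊤) (hart : IsArtinian R V) :
    (∃ r₀ ∈ nonZeroDivisors R, ∀ x ∈ V, r₀ • x = 0) ∧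
    ∃ g : (N ⧸ V) →ₗ[R] N, Function.Surjective g := by
  obtain ⟨hne, hdiv, hsimp⟩ := hN
  set S : Set (Submodule R V) := {W | ∃ r ∈ nonZeroDivisors R, W = r • (⊤ : Submodule R V)}
    with hS
  obtain ⟨W₀, hW₀S, hmin⟩ := IsArtinian.set_has_minimal S ⟨(1:R) • ⊤, 1, one_mem _, rfl⟩
  obtain ⟨r₀, hr₀, rfl⟩ := hW₀S
  have key : ∀ r ∈ nonZeroDivisors R, (r * r₀) • (⊤ : Submodule R V) = r₀ • ⊤ := by
    intro r hr
    have hle : (r * r₀) • (⊤ : Submodule R V) ≤ r₀ • ⊤ := by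
      rw [mul_comm, mul_smul]
      exact Submodule.map_mono le_top
    exact hle.eq_of_not_lt (hmin _ ⟨r * r₀, mul_mem hr hr₀, rfl⟩)
  -- the image of r₀ • ⊤ in N
  set D : Submodule R N := (r₀ • (⊤ : Submodule R V)).map V.subtype with hD
  have hDdiv : IsDivisibleSub R D := by
    intro r hr x hx
    obtain ⟨w, hw, rfl⟩ := hx
    rw [← key r hr] at hw
    obtain ⟨u, -, rfl⟩ := (mem_psmul _ _ _).mp hw
    refine ⟨V.subtype (r₀ • u), ⟨r₀ • u, (mem_psmul _ _ _).mpr ⟨u, trivial, rfl⟩, rfl⟩, ?_⟩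
    simp [mul_smul, smul_comm r r₀]
  have hDtop : D ≠ ⊤ := by
    intro h
    apply hV
    refine top_le_iff.mp ?_
    rw [← h]
    rintro x ⟨w, -, rfl⟩
    exact w.2
  have hDbot : D = ⊥ := by
    by_contra h
    exact hsimp D h hDtop hDdiv
  have hann : ∀ x ∈ V, r₀ • x = 0 := by
    intro x hx
    have : V.subtype (r₀ • ⟨x, hx⟩) ∈ D :=
      ⟨r₀ • ⟨x, hx⟩, (mem_psmul _ _ _).mpr ⟨⟨x, hx⟩, trivial, rfl⟩, rfl⟩
    rw [hDbot, Submodule.mem_bot] at this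
    simpa using this
  refine ⟨⟨r₀, hr₀, hann⟩, ?_⟩
  -- the map N/V → N induced by x ↦ r₀ • x
  refine ⟨V.liftQ (r₀ • LinearMap.id) (fun x hx => ?_), ?_⟩
  · simpa using hann x hx
  · intro y
    obtain ⟨z, hz⟩ := hdiv r₀ hr₀ y
    exact ⟨V.mkQ z, by simpa using hz⟩
end

section
/- Let (R,m) be a Noetherian local ring, E the injective hull of R/m, and N° = Hom_R(N,E). If N° is simple torsion-free then N is simple divisible; if N° is simple divisible then N is simple torsion-free. -/
section Cogen
variable (R : Type) [CommRing R] [IsLocalRing R]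
    (E : Type) [AddCommGroup E] [Module R E] [Module.Injective R E]
    

lemma cogen (ι : IsLocalRing.ResidueField R →ₗ[R] E) (hι : Function.Injective ι) (M : Type) [AddCommGroup M] [Module R M] (x : M) (hx : x ≠ 0) :
    ∃ f : M →ₗ[R] E, f x ≠ 0 := by
  classical
  set φ := LinearMap.toSpanSingleton R M x with hφ
  have hker : LinearMap.ker φ ≠ ⊤ := by
    intro h
    have : (1 : R) ∈ LinearMap.ker φ := h ▸ Submodule.mem_top
    simp [φ, LinearMap.mem_ker, LinearMap.toSpanSingleton_apply] at this
    exact hx this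
  have hle : LinearMap.ker φ ≤ IsLocalRing.maximalIdeal R :=
    IsLocalRing.le_maximalIdeal hker
  set ψ : R →ₗ[R] E := ι ∘ₗ Algebra.linearMap R (IsLocalRing.ResidueField R) with hψ
  have hker2 : LinearMap.ker φ ≤ LinearMap.ker ψ := by
    intro r hr
    have hm : r ∈ IsLocalRing.maximalIdeal R := hle hr
    have h0 : IsLocalRing.residue R r = 0 := Ideal.Quotient.eq_zero_iff_mem.mpr hm
    simp [ψ, LinearMap.mem_ker, IsLocalRing.ResidueField.algebraMap_eq, h0]
  set g0 : (R ⧸ LinearMap.ker φ) →ₗ[R] E := Submodule.liftQ _ ψ hker2 with hg0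
  set e := φ.quotKerEquivRange with he
  set g : LinearMap.range φ →ₗ[R] E := g0 ∘ₗ (e.symm : LinearMap.range φ →ₗ[R] _) with hg
  obtain ⟨f, hf⟩ := Module.Injective.out (LinearMap.range φ).subtype
    (Submodule.injective_subtype _) g
  have hxmem : x ∈ LinearMap.range φ := ⟨1, by simp [φ]⟩
  refine ⟨f, ?_⟩
  have h1 : f x = g ⟨x, hxmem⟩ := hf ⟨x, hxmem⟩
  have h2 : (⟨x, hxmem⟩ : LinearMap.range φ) = e (Submodule.Quotient.mk 1) := by
    have := φ.quotKerEquivRange_apply_mk 1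
    simp [e] at this ⊢
    exact Subtype.ext (by simp [this, φ])
  rw [h1, h2, hg]
  simp only [LinearMap.coe_comp, Function.comp_apply, LinearEquiv.coe_coe,
    LinearEquiv.symm_apply_apply]
  have : g0 (Submodule.Quotient.mk 1) = ψ 1 := Submodule.liftQ_apply _ ψ 1
  rw [this]
  simp only [ψ, LinearMap.coe_comp, Function.comp_apply, Algebra.linearMap_apply, map_one]
  intro h0
  have : (1 : IsLocalRing.ResidueField R) = 0 := hι (by simpa using h0)
  exact one_ne_zero this

end Cogen

/-- The annihilator of a submodule `V ≤ N` inside `Hom(N,E)`. -/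
def annSub {R N : Type} [CommRing R] [AddCommGroup N] [Module R N]
    (E : Type) [AddCommGroup E] [Module R E] (V : Submodule R N) :
    Submodule R (N →ₗ[R] E) where
  carrier := {f | ∀ v ∈ V, f v = 0}
  add_mem' := by intro f g hf hg v hv; simp [hf v hv, hg v hv]
  zero_mem' := by intro v hv; simp
  smul_mem' := by intro r f hf v hv; simp [hf v hv]

lemma mem_annSub {R N : Type} [CommRing R] [AddCommGroup N] [Module R N]
    {E : Type} [AddCommGroup E] [Module R E] {V : Submodule R N} {f : N →ₗ[R] E} :
    f ∈ annSub E V ↔ ∀ v ∈ V, f v = 0 := Iff.rfl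

/-- Let `(R, m)` be a Noetherian local ring, `E` the injective hull of `R/m`
(an injective module containing the residue field as an essential submodule) and
`N° = Hom_R(N, E)` the Matlis dual.  If `N°` is simple torsion-free then `N` is
simple divisible; if `N°` is simple divisible then `N` is simple torsion-free. -/
theorem stmt16 (R : Type) [CommRing R] [IsNoetherianRing R] [IsLocalRing R]
    (E : Type) [AddCommGroup E] [Module R E] [Module.Injective R E]
    (ι : IsLocalRing.ResidueField R →ₗ[R] E) (hι : Function.Injective ι)
    (hess : ∀ U : Submodule R E, U ≠ ⊥ → U ⊓ LinearMap.range ι ≠ ⊥)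
    (N : Type) [AddCommGroup N] [Module R N] :
    (SimpleTorsionFree R (N →ₗ[R] E) → SimpleDivisible R N) ∧
    (SimpleDivisible R (N →ₗ[R] E) → SimpleTorsionFree R N) := by
  have cog : ∀ (M : Type) [AddCommGroup M] [Module R M] (x : M), x ≠ 0 →
      ∃ f : M →ₗ[R] E, f x ≠ 0 := fun M _ _ x hx => cogen R E ι hι M x hx
  -- nonzero map vanishing on a proper submodule, nonvanishing at a given point outside
  have cogq : ∀ (V : Submodule R N) (x : N), x ∉ V →
      ∃ f : N →ₗ[R] E, f x ≠ 0 ∧ f ∈ annSub E V := by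
    intro V x hx
    have hmk : (Submodule.Quotient.mk x : N ⧸ V) ≠ 0 := by
      simpa [Submodule.Quotient.mk_eq_zero] using hx
    obtain ⟨f, hf⟩ := cog (N ⧸ V) (Submodule.Quotient.mk x) hmk
    refine ⟨f ∘ₗ V.mkQ, by simpa using hf, ?_⟩
    intro v hv
    simp [Submodule.Quotient.mk_eq_zero, (Submodule.Quotient.mk_eq_zero V).mpr hv]
  constructor
  · rintro ⟨⟨f0, hf0⟩, hTF, hnoquot⟩
    have hN : ∃ x : N, x ≠ 0 := by
      by_contra h
      push_neg at h
      exact hf0 (by ext x; simp [h x])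
    refine ⟨hN, ?_, ?_⟩
    · -- divisibility of N
      intro r hr x
      by_contra h
      push_neg at h
      set W : Submodule R N := LinearMap.range (r • (LinearMap.id : N →ₗ[R] N)) with hW
      have hxW : x ∉ W := by
        rintro ⟨y, hy⟩
        exact h y (by simpa using hy)
      obtain ⟨f, hfx, hfW⟩ := cogq W x hxW
      have hrf : r • f = 0 := by
        ext y
        have hmem : r • y ∈ W := ⟨y, by simp⟩
        have h2 := hfW _ hmem
        rw [map_smul] at h2
        simpa using h2
      exact hfx (by simpa using congrArg (fun g => g x) (hTF r f hr hrf))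
    · -- no proper nonzero divisible submodule
      intro V hVbot hVtop hVdiv
      set U : Submodule R (N →ₗ[R] E) := annSub E V with hU
      have hUbot : U ≠ ⊥ := by
        obtain ⟨x, hx⟩ : ∃ x : N, x ∉ V := by
          by_contra h; push_neg at h
          exact hVtop (Submodule.eq_top_iff'.mpr h)
        obtain ⟨f, hfx, hfV⟩ := cogq V x hx
        intro hb
        have hm : f ∈ U := hfV
        rw [hb, Submodule.mem_bot] at hm
        exact hfx (by simp [hm])
      have hUtop : U ≠ ⊤ := by
        obtain ⟨v, hvV, hv0⟩ := (Submodule.ne_bot_iff V).mp hVbot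
        obtain ⟨f, hf⟩ := cog N v hv0
        intro ht
        have hm : f ∈ U := ht ▸ Submodule.mem_top
        exact hf (hm v hvV)
      refine hnoquot U hUbot hUtop ?_
      intro r q hr hq
      obtain ⟨f, rfl⟩ := Submodule.Quotient.mk_surjective U q
      rw [← Submodule.Quotient.mk_smul, Submodule.Quotient.mk_eq_zero] at hq
      rw [Submodule.Quotient.mk_eq_zero]
      intro v hv
      obtain ⟨w, hwV, hw⟩ := hVdiv r hr v hv
      have h3 : (r • f) w = 0 := hq w hwV
      calc f v = f (r • w) := by rw [hw]
        _ = r • f w := map_smul f r w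
        _ = 0 := by simpa using h3
  · rintro ⟨⟨f0, hf0⟩, hDiv, hnosub⟩
    have hN : ∃ x : N, x ≠ 0 := by
      by_contra h
      push_neg at h
      exact hf0 (by ext x; simp [h x])
    refine ⟨hN, ?_, ?_⟩
    · -- N torsion-free
      intro r x hr hrx
      by_contra hx
      obtain ⟨f, hf⟩ := cog N x hx
      obtain ⟨g, hg⟩ := hDiv r hr f
      have : f x = 0 := by
        rw [← hg]
        have : g (r • x) = r • g x := map_smul g r x
        simpa [hrx] using this.symm
      exact hf this
    · -- no proper nonzero torsion-free quotient
      intro U hUbot hUtop hq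
      set V : Submodule R (N →ₗ[R] E) := annSub E U with hV
      have hVbot : V ≠ ⊥ := by
        obtain ⟨x, hx⟩ : ∃ x : N, x ∉ U := by
          by_contra h; push_neg at h
          exact hUtop (Submodule.eq_top_iff'.mpr h)
        obtain ⟨f, hfx, hfU⟩ := cogq U x hx
        intro hb
        have hm : f ∈ V := hfU
        rw [hb, Submodule.mem_bot] at hm
        exact hfx (by simp [hm])
      have hVtop : V ≠ ⊤ := by
        obtain ⟨u, huU, hu0⟩ := (Submodule.ne_bot_iff U).mp hUbot
        obtain ⟨f, hf⟩ := cog N u hu0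
        intro ht
        have hm : f ∈ V := ht ▸ Submodule.mem_top
        exact hf (hm u huU)
      refine hnosub V hVbot hVtop ?_
      intro r hr f hfV
      have hker : U ≤ LinearMap.ker f := fun u hu => LinearMap.mem_ker.mpr (hfV u hu)
      set fb : (N ⧸ U) →ₗ[R] E := Submodule.liftQ U f hker with hfb
      have hinj : Function.Injective (r • (LinearMap.id : (N ⧸ U) →ₗ[R] (N ⧸ U))) := by
        intro a b hab
        have : r • (a - b) = 0 := by
          have h1 : r • a = r • b := by simpa using hab
          rw [smul_sub, h1, sub_self]
        have := hq r (a - b) hr this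
        exact sub_eq_zero.mp this
      obtain ⟨h, hh⟩ := Module.Injective.out _ hinj fb
      refine ⟨h ∘ₗ U.mkQ, ?_, ?_⟩
      · intro u hu
        simp [Submodule.mkQ_apply, (Submodule.Quotient.mk_eq_zero U).mpr hu]
      · ext x
        have h1 := hh (Submodule.Quotient.mk x)
        have h2 : ((r • (LinearMap.id : (N ⧸ U) →ₗ[R] (N ⧸ U)))) (Submodule.Quotient.mk x)
            = r • (Submodule.Quotient.mk x : N ⧸ U) := by simp
        rw [h2] at h1
        have h3 : h (r • (Submodule.Quotient.mk x : N ⧸ U)) = r • h (Submodule.Quotient.mk x) :=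
          map_smul h r _
        simp only [LinearMap.smul_apply, LinearMap.coe_comp, Function.comp_apply,
          Submodule.mkQ_apply]
        rw [← h3, h1, hfb]
        simp
end

section
/- Let R be a Noetherian local ring with dim(R/p) = 1 for a prime p. Then κ(p) = R_p/(p R_p) is a simple socle-free R-module: κ(p) has zero socle, and for every submodule 0 ≠ U ⊊ κ(p) the quotient κ(p)/U has nonzero socle (indeed is semi-Artinian). -/
open IsLocalRing

set_option linter.unusedSectionVars false

section Aux

variable {R : Type} [CommRing R] [IsNoetherianRing R] [IsLocalRing R]
    (p : Ideal R) [p.IsPrime]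

/-- Scalar action of `R` on the residue field of the localization. -/
lemma stmt19_smul_eq (r : R) (x : ResidueField (Localization.AtPrime p)) :
    r • x = residue (Localization.AtPrime p) (algebraMap R (Localization.AtPrime p) r) * x := by
  rw [Algebra.smul_def, IsScalarTower.algebraMap_apply R (Localization.AtPrime p)
    (ResidueField (Localization.AtPrime p)), ResidueField.algebraMap_eq]

lemma stmt19_residue_zero_iff (r : R) :
    residue (Localization.AtPrime p) (algebraMap R (Localization.AtPrime p) r) = 0 ↔ r ∈ p := by
  rw [residue_eq_zero_iff]
  exact IsLocalization.AtPrime.to_map_mem_maximal_iff (Localization.AtPrime p) p r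

/-- Any prime strictly containing `p` is the maximal ideal, when `dim R/p = 1`. -/
lemma stmt19_prime_eq_max (hp : ringKrullDim (R ⧸ p) = 1)
    (q : Ideal R) (hq : q.IsPrime) (hpq : p ≤ q) (hne : q ≠ p) :
    q = maximalIdeal R := by
  by_contra hqm
  have hq_le_m : q ≤ maximalIdeal R := le_maximalIdeal hq.ne_top
  have h1 : p < q := lt_of_le_of_ne hpq (Ne.symm hne)
  have h2 : q < maximalIdeal R := lt_of_le_of_ne hq_le_m hqm
  set f := Ideal.Quotient.mk p with hf
  have hkerf : RingHom.ker f = p := Ideal.mk_ker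
  have hsurj : Function.Surjective f := Ideal.Quotient.mk_surjective
  haveI : (q.map f).IsPrime :=
    Ideal.map_isPrime_of_surjective hsurj (by rw [hkerf]; exact hpq)
  haveI : ((maximalIdeal R).map f).IsPrime :=
    Ideal.map_isPrime_of_surjective hsurj (by rw [hkerf]; exact hpq.trans hq_le_m)
  have hcq : (q.map f).comap f = q := by
    rw [Ideal.comap_map_of_surjective f hsurj, ← RingHom.ker_eq_comap_bot, hkerf,
      sup_eq_left.mpr hpq]
  have hcm : (((maximalIdeal R).map f)).comap f = maximalIdeal R := by
    rw [Ideal.comap_map_of_surjective f hsurj, ← RingHom.ker_eq_comap_bot, hkerf,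
      sup_eq_left.mpr (hpq.trans hq_le_m)]
  have l1 : (⊥ : Ideal (R ⧸ p)) < q.map f := by
    rcases SetLike.exists_of_lt h1 with ⟨t, htq, htp⟩
    refine bot_lt_iff_ne_bot.mpr fun h => ?_
    have : f t ∈ q.map f := Ideal.mem_map_of_mem f htq
    rw [h, Ideal.mem_bot, Ideal.Quotient.eq_zero_iff_mem] at this
    exact htp this
  have l2 : q.map f < (maximalIdeal R).map f :=
    lt_of_le_of_ne (Ideal.map_mono h2.le) fun h => h2.ne (by rw [← hcq, h, hcm])
  haveI : IsDomain (R ⧸ p) := Ideal.Quotient.isDomain p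
  let c : LTSeries (PrimeSpectrum (R ⧸ p)) :=
    { length := 2
      toFun := ![⟨⊥, Ideal.bot_prime⟩, ⟨q.map f, ‹_›⟩, ⟨(maximalIdeal R).map f, ‹_›⟩]
      step := by
        intro i
        fin_cases i
        · exact (PrimeSpectrum.asIdeal_lt_asIdeal _ _).mp l1
        · exact (PrimeSpectrum.asIdeal_lt_asIdeal _ _).mp l2 }
  have hle := Order.LTSeries.length_le_krullDim c
  rw [show (Order.krullDim (PrimeSpectrum (R ⧸ p))) = ringKrullDim (R ⧸ p) from rfl, hp] at hle
  norm_num [c] at hle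

end Aux

/-- Let `R` be a Noetherian local ring with maximal ideal `m` and `p` a prime with
`dim(R/p) = 1`.  Then `κ(p) = R_p/(p R_p)` is a simple socle-free `R`-module:
its socle (the elements annihilated by `m`) is zero, while for every submodule
`0 ≠ U ⊊ κ(p)` the quotient `κ(p)/U` has nonzero socle — indeed it is
semi-Artinian, i.e. every nonzero quotient `κ(p)/W` (with `U ≤ W ⊊ κ(p)`) has a
nonzero element annihilated by `m`. -/
theorem stmt19 (R : Type) [CommRing R] [IsNoetherianRing R] [IsLocalRing R]
    (p : Ideal R) [p.IsPrime] (hp : ringKrullDim (R ⧸ p) = 1) :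
    (∀ x : IsLocalRing.ResidueField (Localization.AtPrime p),
        (∀ r ∈ IsLocalRing.maximalIdeal R, r • x = 0) → x = 0) ∧
    (∀ U : Submodule R (IsLocalRing.ResidueField (Localization.AtPrime p)),
      U ≠ ⊥ → U ≠ ⊤ →
      ∀ W : Submodule R (IsLocalRing.ResidueField (Localization.AtPrime p)),
        U ≤ W → W ≠ ⊤ →
        ∃ x : IsLocalRing.ResidueField (Localization.AtPrime p) ⧸ W,
          x ≠ 0 ∧ ∀ r ∈ IsLocalRing.maximalIdeal R, r • x = 0) := by
  classical
  -- `p` is not the maximal ideal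
  have hpm : p ≠ maximalIdeal R := by
    intro h
    haveI : p.IsMaximal := h ▸ maximalIdeal.isMaximal R
    letI : Field (R ⧸ p) := Ideal.Quotient.field p
    rw [ringKrullDim_eq_zero_of_field] at hp
    exact zero_ne_one hp
  obtain ⟨t₀, ht₀m, ht₀p⟩ : ∃ t₀ ∈ maximalIdeal R, t₀ ∉ p :=
    SetLike.exists_of_lt (lt_of_le_of_ne (le_maximalIdeal (Ideal.IsPrime.ne_top ‹_›)) hpm)
  constructor
  · -- socle-free
    intro x hx
    have h := hx t₀ ht₀m
    rw [stmt19_smul_eq] at h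
    rcases mul_eq_zero.mp h with h | h
    · exact absurd ((stmt19_residue_zero_iff p t₀).mp h) ht₀p
    · exact h
  · intro U hU0 _ W hUW hWtop
    obtain ⟨x, hxW⟩ : ∃ x, x ∉ W := by
      by_contra h
      push_neg at h
      exact hWtop (eq_top_iff.mpr fun z _ => h z)
    obtain ⟨w, hwU, hw0⟩ := Submodule.exists_mem_ne_zero_of_ne_bot hU0
    have hwW : w ∈ W := hUW hwU
    -- find `t ∉ p` and `a : R` with `t • x = a • w ∈ W`
    obtain ⟨s, hs⟩ := residue_surjective (R := Localization.AtPrime p) (x * w⁻¹)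
    obtain ⟨⟨a, t⟩, hat⟩ := IsLocalization.mk'_surjective p.primeCompl s
    have htx : (t : R) • x = a • w := by
      rw [stmt19_smul_eq, stmt19_smul_eq]
      have key : algebraMap R (Localization.AtPrime p) t * s
          = algebraMap R (Localization.AtPrime p) a := by
        rw [← hat]; exact IsLocalization.mk'_spec' _ a t
      have hx' : residue (Localization.AtPrime p) s * w = x := by
        rw [hs, mul_assoc, inv_mul_cancel₀ hw0, mul_one]
      calc residue (Localization.AtPrime p) (algebraMap R (Localization.AtPrime p) t) * x
          = residue (Localization.AtPrime p) (algebraMap R (Localization.AtPrime p) t)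
            * (residue (Localization.AtPrime p) s * w) := by rw [hx']
        _ = residue (Localization.AtPrime p)
            (algebraMap R (Localization.AtPrime p) t * s) * w := by rw [map_mul, mul_assoc]
        _ = residue (Localization.AtPrime p) (algebraMap R (Localization.AtPrime p) a) * w := by
            rw [key]
    -- pass to the quotient
    set M := IsLocalRing.ResidueField (Localization.AtPrime p) ⧸ W with hM
    set xb : M := Submodule.Quotient.mk x with hxb
    have hxb0 : xb ≠ 0 := by
      rw [hxb, ne_eq, Submodule.Quotient.mk_eq_zero]
      exact hxW
    set I : Ideal R := (Submodule.span R {xb}).annihilator with hI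
    have hmemI : ∀ r : R, r ∈ I ↔ r • xb = 0 := fun r =>
      Submodule.mem_annihilator_span_singleton xb r
    have htI : (t : R) ∈ I := by
      rw [hmemI]
      rw [hxb, ← Submodule.Quotient.mk_smul, htx, Submodule.Quotient.mk_eq_zero]
      exact W.smul_mem a hwW
    have hpI : p ≤ I := by
      intro r hr
      rw [hmemI, hxb, ← Submodule.Quotient.mk_smul, stmt19_smul_eq,
        (stmt19_residue_zero_iff p r).mpr hr, zero_mul]
      exact Submodule.Quotient.mk_eq_zero W |>.mpr W.zero_mem
    have hInetop : I ≠ ⊤ := by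
      intro h
      exact hxb0 (by simpa using (hmemI 1).mp (h ▸ Submodule.mem_top))
    -- radical of I is the maximal ideal
    have hrad : I.radical = maximalIdeal R := by
      rw [Ideal.radical_eq_sInf]
      apply le_antisymm
      · exact sInf_le ⟨le_maximalIdeal hInetop, (maximalIdeal.isMaximal R).isPrime⟩
      · refine le_sInf ?_
        rintro J ⟨hIJ, hJp⟩
        have hJne : J ≠ p := by
          intro h
          rw [h] at hIJ
          exact t.2 (hIJ htI)
        rw [stmt19_prime_eq_max p hp J hJp (hpI.trans hIJ) hJne]
    obtain ⟨n, hn⟩ := Ideal.exists_radical_pow_le_of_fg I (IsNoetherian.noetherian _)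
    rw [hrad] at hn
    -- the key predicate
    set N : Submodule R M := Submodule.span R {xb} with hN
    have hPn : (maximalIdeal R) ^ n • N = ⊥ := by
      rw [eq_bot_iff]
      intro z hz
      refine Submodule.smul_induction_on hz ?_ ?_
      · intro r hr y hy
        obtain ⟨c, rfl⟩ := Submodule.mem_span_singleton.mp hy
        have hrI : r ∈ I := hn hr
        rw [smul_comm, (hmemI r).mp hrI, smul_zero]
        exact Submodule.zero_mem ⊥
      · intro y z hy hz
        simpa using Submodule.add_mem _ hy hz
    have hex : ∃ k, (maximalIdeal R) ^ k • N = ⊥ := ⟨n, hPn⟩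
    set n₀ := Nat.find hex with hn₀
    have hP : (maximalIdeal R) ^ n₀ • N = ⊥ := Nat.find_spec hex
    have hn₀pos : n₀ ≠ 0 := by
      intro h
      have : N = ⊥ := by
        have := hP
        rw [h, pow_zero, Ideal.one_eq_top, Submodule.top_smul] at this
        exact this
      exact hxb0 (by
        have : xb ∈ (⊥ : Submodule R M) := this ▸ Submodule.mem_span_singleton_self xb
        simpa using this)
    have hnotP : (maximalIdeal R) ^ (n₀ - 1) • N ≠ ⊥ :=
      Nat.find_min hex (by omega)
    obtain ⟨z, hzmem, hz0⟩ := Submodule.exists_mem_ne_zero_of_ne_bot hnotP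
    refine ⟨z, hz0, ?_⟩
    intro r hr
    have hrz : r • z ∈ (maximalIdeal R) ^ n₀ • N := by
      have : r • z ∈ maximalIdeal R • ((maximalIdeal R) ^ (n₀ - 1) • N) :=
        Submodule.smul_mem_smul hr hzmem
      rwa [← Submodule.smul_assoc, Ideal.smul_eq_mul, ← pow_succ',
        Nat.sub_add_cancel (Nat.one_le_iff_ne_zero.mpr hn₀pos)] at this
    rw [hP] at hrz
    simpa using hrz
end
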